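/- arXiv:1905.07759 — 8 statements merged into one kernel-verified Lean document; each statement's English description precedes it below -/
import Mathlib

section
/- Let N ≥ 2, 1 < q < 1* := N/(N-1), a > 0, b > 0, and let g(t) := ((1+t)^{1/b} - 1)(1+t)^{(q-1)(N/a - (N-1)/b)} / t^{(q-1)N/a} for t > 0. If a > N(q-1), then inf_{t>0} g(t) = 0, while if a < N(q-1), then inf_{t>0} g(t) > 0 and the infimum is attained at some t₀ ∈ (0, ∞). -/
open Real Filter Topology Set

noncomputable def Gfun (b c d t : ℝ) : ℝ := ((1+t) ^ (1/b) - 1) * (1+t) ^ c / t ^ d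

lemma Gpos {b c d : ℝ} (hb : 0 < b) {t : ℝ} (ht : 0 < t) : 0 < Gfun b c d t := by
  have hu : (0:ℝ) < 1 + t := by linarith
  have h1 : 1 < (1+t) ^ (1/b) := by
    rw [Real.one_lt_rpow_iff_of_pos hu]
    exact Or.inl ⟨by linarith, by positivity⟩
  have := Real.rpow_pos_of_pos hu c
  have h2 := Real.rpow_pos_of_pos hu c
  have h3 := Real.rpow_pos_of_pos ht d
  unfold Gfun
  have : 0 < (1+t) ^ (1/b) - 1 := by linarith
  positivity

lemma GcontOn (b c d : ℝ) : ContinuousOn (Gfun b c d) (Ioi 0) := by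
  unfold Gfun
  apply ContinuousOn.div
  · apply ContinuousOn.mul
    · apply ContinuousOn.sub _ continuousOn_const
      apply ContinuousOn.rpow_const (by fun_prop)
      intro t ht; left; intro h; simp only [mem_Ioi] at ht; linarith
    · apply ContinuousOn.rpow_const (by fun_prop)
      intro t ht; left; intro h; simp only [mem_Ioi] at ht; linarith
  · apply ContinuousOn.rpow_const continuousOn_id
    intro t ht; left; exact ne_of_gt ht
  · intro t ht
    exact ne_of_gt (Real.rpow_pos_of_pos ht d)

lemma slope_lim {b : ℝ} (hb : 0 < b) :
    Tendsto (fun t => ((1+t) ^ (1/b) - 1)/t) (𝓝[>] (0:ℝ)) (𝓝 (1/b)) := by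
  have h1 : HasDerivAt (fun t : ℝ => (1+t) ^ (1/b)) (1/b) 0 := by
    have hbase : HasDerivAt (fun t : ℝ => (1:ℝ)+t) 1 0 := by
      simpa using (hasDerivAt_id (0:ℝ)).const_add 1
    have hr : HasDerivAt (fun x : ℝ => x ^ (1/b)) (1/b * ((1:ℝ)+0) ^ (1/b-1)) ((1:ℝ)+0) :=
      Real.hasDerivAt_rpow_const (Or.inl (by norm_num))
    have := hr.comp 0 hbase
    simpa [Function.comp_def] using this
  have h2 := hasDerivAt_iff_tendsto_slope.mp h1
  have h3 : Tendsto (slope (fun t : ℝ => (1+t) ^ (1/b)) 0) (𝓝[>] (0:ℝ)) (𝓝 (1/b)) :=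
    h2.mono_left (nhdsWithin_mono _ (fun x hx => ne_of_gt hx))
  refine h3.congr' ?_
  filter_upwards [self_mem_nhdsWithin] with t ht
  simp [slope_def_field, div_eq_div_iff]

lemma Gfactor0 {b c d t : ℝ} (ht : 0 < t) :
    Gfun b c d t = (((1+t) ^ (1/b) - 1)/t) * (1+t) ^ c * t ^ (1-d) := by
  have h : t ^ ((1:ℝ)-d) = t * (t ^ d)⁻¹ := by
    rw [show (1:ℝ)-d = 1 + (-d) by ring, Real.rpow_add ht, Real.rpow_one, Real.rpow_neg ht.le]
  rw [Gfun, h]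
  field_simp

lemma rpow_base_lim (c : ℝ) : Tendsto (fun t : ℝ => (1+t) ^ c) (𝓝[>] (0:ℝ)) (𝓝 1) := by
  have h : ContinuousAt (fun t : ℝ => (1+t) ^ c) 0 := by
    apply ContinuousAt.rpow_const (by fun_prop)
    left; norm_num
  have h2 : Tendsto (fun t : ℝ => (1+t) ^ c) (𝓝[>] (0:ℝ)) (𝓝 (((1:ℝ)+0) ^ c)) :=
    h.tendsto.mono_left nhdsWithin_le_nhds
  simpa using h2

lemma Gzero {b c d : ℝ} (hb : 0 < b) (hd : d < 1) :
    Tendsto (Gfun b c d) (𝓝[>] (0:ℝ)) (𝓝 0) := by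
  have h3 : Tendsto (fun t : ℝ => t ^ (1-d)) (𝓝[>] (0:ℝ)) (𝓝 0) := by
    have h : ContinuousAt (fun t : ℝ => t ^ (1-d)) 0 :=
      Real.continuousAt_rpow_const 0 (1-d) (Or.inr (by linarith))
    have h2 : Tendsto (fun t : ℝ => t ^ (1-d)) (𝓝[>] (0:ℝ)) (𝓝 ((0:ℝ) ^ (1-d))) :=
      h.tendsto.mono_left nhdsWithin_le_nhds
    simpa [Real.zero_rpow (show (1:ℝ)-d ≠ 0 by intro h; linarith)] using h2
  have hall := ((slope_lim hb).mul (rpow_base_lim c)).mul h3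
  rw [show (1/b * 1) * 0 = 0 by ring] at hall
  refine hall.congr' ?_
  filter_upwards [self_mem_nhdsWithin] with t ht
  exact (Gfactor0 (mem_Ioi.mp ht)).symm

lemma GatTop0 {b c d : ℝ} (hb : 0 < b) (hd : 1 < d) :
    Tendsto (Gfun b c d) (𝓝[>] (0:ℝ)) atTop := by
  have h3 : Tendsto (fun t : ℝ => t ^ (1-d)) (𝓝[>] (0:ℝ)) atTop := by
    have hA : Tendsto (fun t : ℝ => t ^ (d-1)) (𝓝[>] (0:ℝ)) (𝓝[>] (0:ℝ)) := by
      rw [tendsto_nhdsWithin_iff]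
      constructor
      · have h : ContinuousAt (fun t : ℝ => t ^ (d-1)) 0 :=
          Real.continuousAt_rpow_const 0 (d-1) (Or.inr (by linarith))
        have h2 : Tendsto (fun t : ℝ => t ^ (d-1)) (𝓝[>] (0:ℝ)) (𝓝 ((0:ℝ) ^ (d-1))) :=
          h.tendsto.mono_left nhdsWithin_le_nhds
        simpa [Real.zero_rpow (show d-1 ≠ 0 by intro h; linarith)] using h2
      · filter_upwards [self_mem_nhdsWithin] with t ht
        exact Real.rpow_pos_of_pos (mem_Ioi.mp ht) _
    have : Tendsto (fun t : ℝ => t ^ (d-1))⁻¹ (𝓝[>] (0:ℝ)) atTop :=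
      tendsto_inv_nhdsGT_zero.comp hA
    refine this.congr' ?_
    filter_upwards [self_mem_nhdsWithin] with t ht
    rw [Pi.inv_apply, ← Real.rpow_neg (le_of_lt (mem_Ioi.mp ht))]
    norm_num
  have hall := Filter.Tendsto.pos_mul_atTop (show (0:ℝ) < 1/b * 1 by positivity)
    ((slope_lim hb).mul (rpow_base_lim c)) h3
  refine hall.congr' ?_
  filter_upwards [self_mem_nhdsWithin] with t ht
  exact (Gfactor0 (mem_Ioi.mp ht)).symm

lemma GfactorTop {b c d t : ℝ} (ht : 0 < t) :
    Gfun b c d t = (1 - (1+t) ^ (-(1/b))) * ((1+t)/t) ^ d * (1+t) ^ (1/b + c - d) := by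
  have hu : (0:ℝ) < 1 + t := by linarith
  have htd : t ^ d ≠ 0 := ne_of_gt (Real.rpow_pos_of_pos ht _)
  have e1 : (1+t) ^ d * (1+t) ^ (1/b + c - d) = (1+t) ^ (1/b + c) := by
    rw [← Real.rpow_add hu]; congr 1; ring
  have e2 : (1+t) ^ (-(1/b)) * (1+t) ^ (1/b + c) = (1+t) ^ c := by
    rw [← Real.rpow_add hu]; congr 1; ring
  have e3 : (1+t) ^ (1/b) * (1+t) ^ c = (1+t) ^ (1/b + c) := by
    rw [← Real.rpow_add hu]
  have key : (1 - (1+t) ^ (-(1/b))) * (1+t) ^ d * (1+t) ^ (1/b + c - d)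
      = ((1+t) ^ (1/b) - 1) * (1+t) ^ c := by
    calc (1 - (1+t) ^ (-(1/b))) * (1+t) ^ d * (1+t) ^ (1/b + c - d)
        = (1+t) ^ d * (1+t) ^ (1/b+c-d)
          - (1+t) ^ (-(1/b)) * ((1+t) ^ d * (1+t) ^ (1/b+c-d)) := by ring
      _ = (1+t) ^ (1/b+c) - (1+t) ^ c := by rw [e1, e2]
      _ = ((1+t) ^ (1/b) - 1) * (1+t) ^ c := by rw [sub_mul, one_mul, e3]
  rw [Gfun, Real.div_rpow hu.le ht.le, ← key]
  field_simp

lemma GatTopTop {b c d : ℝ} (hb : 0 < b) (he : 0 < 1/b + c - d) :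
    Tendsto (Gfun b c d) atTop atTop := by
  have hplus : Tendsto (fun t : ℝ => 1 + t) atTop atTop :=
    tendsto_atTop_add_const_left _ 1 tendsto_id
  have f1 : Tendsto (fun t : ℝ => 1 - (1+t) ^ (-(1/b))) atTop (𝓝 1) := by
    have h := (tendsto_rpow_neg_atTop (show (0:ℝ) < 1/b by positivity)).comp hplus
    have := (tendsto_const_nhds (x := (1:ℝ)) (f := atTop)).sub h
    simpa using this
  have f2 : Tendsto (fun t : ℝ => ((1+t)/t) ^ d) atTop (𝓝 1) := by
    have hq : Tendsto (fun t : ℝ => (1+t)/t) atTop (𝓝 1) := by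
      have h := (tendsto_inv_atTop_zero (𝕜 := ℝ)).add (tendsto_const_nhds (x := (1:ℝ)))
      rw [zero_add] at h
      refine h.congr' ?_
      filter_upwards [eventually_gt_atTop (0:ℝ)] with t ht
      field_simp
    have hc : ContinuousAt (fun x : ℝ => x ^ d) 1 :=
      Real.continuousAt_rpow_const 1 d (Or.inl one_ne_zero)
    have := hc.tendsto.comp hq
    simpa [Function.comp_def] using this
  have f3 : Tendsto (fun t : ℝ => (1+t) ^ (1/b + c - d)) atTop atTop :=
    (tendsto_rpow_atTop he).comp hplus
  have hall := Filter.Tendsto.pos_mul_atTop (show (0:ℝ) < 1 * 1 by norm_num) (f1.mul f2) f3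
  refine hall.congr' ?_
  filter_upwards [eventually_gt_atTop (0:ℝ)] with t ht
  exact (GfactorTop ht).symm

lemma exists_min {b c d : ℝ} (hb : 0 < b) (hd : 1 < d) (he : 0 < 1/b + c - d) :
    ∃ t₀, 0 < t₀ ∧ ∀ t, 0 < t → Gfun b c d t₀ ≤ Gfun b c d t := by
  set M := Gfun b c d 1 with hM
  have h0 : {t : ℝ | M < Gfun b c d t} ∈ 𝓝[>] (0:ℝ) := (GatTop0 hb hd).eventually_gt_atTop M
  obtain ⟨δ, hδpos, hδ⟩ := mem_nhdsGT_iff_exists_Ioc_subset.mp h0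
  have hT := (GatTopTop hb he).eventually_gt_atTop M
  obtain ⟨R, hR⟩ := eventually_atTop.mp hT
  have hδpos' : (0:ℝ) < δ := mem_Ioi.mp hδpos
  set lo := min δ 1 with hlo
  set hi := max R 1 with hhi
  have hlopos : 0 < lo := lt_min hδpos' one_pos
  have h1mem : (1:ℝ) ∈ Icc lo hi := ⟨min_le_right _ _, le_max_right _ _⟩
  have hsub : Icc lo hi ⊆ Ioi 0 := fun t htK => lt_of_lt_of_le hlopos htK.1
  obtain ⟨t₀, ht₀K, hmin⟩ := isCompact_Icc.exists_isMinOn ⟨1, h1mem⟩ ((GcontOn b c d).mono hsub)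
  refine ⟨t₀, lt_of_lt_of_le hlopos ht₀K.1, ?_⟩
  intro t ht
  by_cases h : t ∈ Icc lo hi
  · exact hmin h
  · have hM0 : Gfun b c d t₀ ≤ M := hmin h1mem
    rw [mem_Icc, not_and_or] at h
    push_neg at h
    rcases h with h | h
    · have : t ∈ Ioc 0 δ := ⟨ht, le_of_lt (lt_of_lt_of_le h (min_le_left _ _))⟩
      exact le_of_lt (lt_of_le_of_lt hM0 (hδ this))
    · have : R ≤ t := le_of_lt (lt_of_le_of_lt (le_max_left _ _) h)
      exact le_of_lt (lt_of_le_of_lt hM0 (hR t this))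

/-- behavior of `inf_{t>0} g(t)` according to the sign of `a - N(q-1)`. -/
theorem inf_g_dichotomy (N : ℕ) (hN : 2 ≤ N) (q a b : ℝ) (hq1 : 1 < q)
    (hq2 : q < (N : ℝ) / ((N : ℝ) - 1)) (ha : 0 < a) (hb : 0 < b) :
    (a > (N : ℝ) * (q - 1) →
      sInf { r | ∃ t : ℝ, 0 < t ∧
        r = ((1+t) ^ (1/b) - 1) * (1+t) ^ ((q-1)*((N:ℝ)/a - ((N:ℝ)-1)/b)) /
              t ^ ((q-1)*(N:ℝ)/a) } = 0) ∧
    (a < (N : ℝ) * (q - 1) →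
      0 < sInf { r | ∃ t : ℝ, 0 < t ∧
        r = ((1+t) ^ (1/b) - 1) * (1+t) ^ ((q-1)*((N:ℝ)/a - ((N:ℝ)-1)/b)) /
              t ^ ((q-1)*(N:ℝ)/a) } ∧
      ∃ t₀ : ℝ, 0 < t₀ ∧
        ((1+t₀) ^ (1/b) - 1) * (1+t₀) ^ ((q-1)*((N:ℝ)/a - ((N:ℝ)-1)/b)) /
            t₀ ^ ((q-1)*(N:ℝ)/a) =
          sInf { r | ∃ t : ℝ, 0 < t ∧
            r = ((1+t) ^ (1/b) - 1) * (1+t) ^ ((q-1)*((N:ℝ)/a - ((N:ℝ)-1)/b)) /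
                  t ^ ((q-1)*(N:ℝ)/a) }) := by
  set c := (q-1)*((N:ℝ)/a - ((N:ℝ)-1)/b) with hc
  set d := (q-1)*(N:ℝ)/a with hd
  have hG : ∀ t : ℝ, ((1+t) ^ (1/b) - 1) * (1+t) ^ c / t ^ d = Gfun b c d t := fun t => rfl
  simp only [hG]
  set S := { r | ∃ t : ℝ, 0 < t ∧ r = Gfun b c d t } with hS
  have hNR : (2:ℝ) ≤ (N:ℝ) := by exact_mod_cast hN
  have hne : S.Nonempty := ⟨Gfun b c d 1, 1, one_pos, rfl⟩
  have hbdd : BddBelow S := by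
    refine ⟨0, ?_⟩
    rintro r ⟨t, htpos, rfl⟩
    exact (Gpos hb htpos).le
  have he : 0 < 1/b + c - d := by
    have hden : (0:ℝ) < (N:ℝ) - 1 := by linarith
    have hqN : q * ((N:ℝ)-1) < N := (lt_div_iff₀ hden).mp hq2
    have h1 : (q-1)*((N:ℝ)-1) < 1 := by nlinarith
    have heq : 1/b + c - d = (1 - (q-1)*((N:ℝ)-1))/b := by
      rw [hc, hd]; field_simp; ring
    rw [heq]
    exact div_pos (by linarith) hb
  constructor
  · intro h
    have hd1 : d < 1 := by
      rw [hd, div_lt_one ha]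
      nlinarith
    refine le_antisymm ?_ ?_
    · rw [Real.sInf_le_iff hbdd hne]
      intro ε hε
      have hev : ∀ᶠ t in 𝓝[>] (0:ℝ), Gfun b c d t < ε :=
        (Gzero hb hd1).eventually_lt_const hε
      obtain ⟨t, htlt, htpos⟩ := (hev.and eventually_mem_nhdsWithin).exists
      exact ⟨Gfun b c d t, ⟨t, htpos, rfl⟩, by linarith⟩
    · refine le_csInf hne ?_
      rintro r ⟨t, htpos, rfl⟩
      exact (Gpos hb htpos).le
  · intro h
    have hd1 : 1 < d := by
      rw [hd, one_lt_div ha]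
      nlinarith
    obtain ⟨t₀, ht₀, hmin⟩ := exists_min hb hd1 he
    have hSinf : sInf S = Gfun b c d t₀ := by
      refine le_antisymm (csInf_le hbdd ⟨t₀, ht₀, rfl⟩) (le_csInf hne ?_)
      rintro r ⟨t, htpos, rfl⟩
      exact hmin t htpos
    refine ⟨by rw [hSinf]; exact Gpos hb ht₀, t₀, ht₀, hSinf.symm⟩
end

section
/- Let N ≥ 2, q with (2N-1)/(2(N-1)) < q < N/(N-1), a = N(q-1), and b ≥ b₀ := (q-1)(N-1) - (N - (N-1)q). Then for all t > 0, g(t) := ((1+t)^{1/b} - 1)(1+t)^{(q-1)(N/a - (N-1)/b)} / t^{(q-1)N/a} satisfies g(t) > 1/b; consequently inf_{t>0} g(t) = 1/b (the limit as t → 0⁺) and the infimum is not attained. -/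
open Real Filter Topology Set


lemma aux_hasDeriv (c t : ℝ) (h : 0 < 1 + t) :
    HasDerivAt (fun x : ℝ => (1+x) ^ c) (c * (1+t) ^ (c-1)) t := by
  have h1 : HasDerivAt (fun x : ℝ => 1 + x) 1 t := (hasDerivAt_id t).const_add 1
  have h2 := (Real.hasDerivAt_rpow_const (x := 1+t) (p := c) (Or.inl h.ne')).comp t h1
  rw [mul_one] at h2
  exact h2

lemma aux_phi_pos (α β b : ℝ) (hb : 0 < b) (hα : 1 < α) (hβ : β < 1)
    (hd : α - β = 1/b) (hs : 1 ≤ α + β) :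
    ∀ t : ℝ, 0 < t → 0 < (1+t) ^ α - (1+t) ^ β - t/b := by
  set f1 : ℝ → ℝ := fun x => α * (1+x) ^ (α-1) - β * (1+x) ^ (β-1) - 1/b with hf1
  have hderiv1 : ∀ t : ℝ, 0 < 1 + t →
      HasDerivAt f1 (α * ((α-1) * (1+t) ^ (α-1-1)) - β * ((β-1) * (1+t) ^ (β-1-1))) t := by
    intro t h
    exact (((aux_hasDeriv (α-1) t h).const_mul α).sub
      ((aux_hasDeriv (β-1) t h).const_mul β)).sub_const (1/b)
  have hpos2 : ∀ t : ℝ, 0 < t →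
      0 < α * ((α-1) * (1+t) ^ (α-1-1)) - β * ((β-1) * (1+t) ^ (β-1-1)) := by
    intro t ht
    have h1t : (1:ℝ) < 1 + t := by linarith
    have h0t : (0:ℝ) < 1 + t := by linarith
    have hab : β * (β-1) ≤ α * (α-1) := by
      have h1 : 0 < α - β := by rw [hd]; positivity
      have h2 : 0 ≤ α + β - 1 := by linarith
      nlinarith [mul_nonneg h1.le h2]
    have hrw : (1+t) ^ (α-1-1) = (1+t) ^ (α-β) * (1+t) ^ (β-1-1) := by
      rw [← Real.rpow_add h0t]; ring_nf
    have hgt1 : 1 < (1+t) ^ (α-β) := by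
      apply Real.one_lt_rpow_iff_of_pos h0t |>.mpr
      exact Or.inl ⟨h1t, by rw [hd]; positivity⟩
    have haa : 0 < α * (α-1) := by nlinarith
    have key : β * (β-1) < α * (α-1) * (1+t) ^ (α-β) := by nlinarith
    have hp : 0 < (1+t) ^ (β-1-1) := Real.rpow_pos_of_pos h0t _
    calc 0 < (α * (α-1) * (1+t) ^ (α-β) - β * (β-1)) * (1+t) ^ (β-1-1) := by
            apply mul_pos (by linarith) hp
      _ = α * ((α-1) * (1+t) ^ (α-1-1)) - β * ((β-1) * (1+t) ^ (β-1-1)) := by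
            rw [hrw]; ring
  have mono1 : StrictMonoOn f1 (Ici 0) := by
    apply strictMonoOn_of_deriv_pos (convex_Ici 0)
    · intro x hx
      exact (hderiv1 x (by simp at hx; linarith)).continuousAt.continuousWithinAt
    · intro x hx
      rw [interior_Ici] at hx
      rw [(hderiv1 x (by simp at hx; linarith)).deriv]
      exact hpos2 x hx
  have hf1zero : f1 0 = 0 := by
    simp only [hf1, add_zero, Real.one_rpow, mul_one]
    linarith
  have hf1pos : ∀ t : ℝ, 0 < t → 0 < f1 t := by
    intro t ht
    have := mono1 (Set.mem_Ici.mpr le_rfl) (le_of_lt ht : (0:ℝ) ≤ t) ht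
    rwa [hf1zero] at this
  set f : ℝ → ℝ := fun x => (1+x) ^ α - (1+x) ^ β - x/b with hf
  have hderiv : ∀ t : ℝ, 0 < 1 + t → HasDerivAt f (f1 t) t := by
    intro t h
    have := ((aux_hasDeriv α t h).sub (aux_hasDeriv β t h)).sub
      ((hasDerivAt_id t).div_const b)
    exact this
  have mono : StrictMonoOn f (Ici 0) := by
    apply strictMonoOn_of_deriv_pos (convex_Ici 0)
    · intro x hx
      exact (hderiv x (by simp at hx; linarith)).continuousAt.continuousWithinAt
    · intro x hx
      rw [interior_Ici] at hx
      rw [(hderiv x (by simp at hx; linarith)).deriv]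
      exact hf1pos x hx
  intro t ht
  have := mono (Set.mem_Ici.mpr le_rfl) (le_of_lt ht : (0:ℝ) ≤ t) ht
  simpa [hf] using this

/-- in the case `a = N(q-1)`, `(2N-1)/(2(N-1)) < q < N/(N-1)`,
`b ≥ b₀`, one has `g > 1/b` on `(0,∞)`; the infimum equals `1/b` and is not
attained. -/
theorem g_gt_inv_b_of_b_ge_b0 (N : ℕ) (hN : 2 ≤ N) (q a b : ℝ)
    (hq1 : (2*(N:ℝ)-1) / (2*((N:ℝ)-1)) < q) (hq2 : q < (N : ℝ) / ((N : ℝ) - 1))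
    (ha : a = (N : ℝ) * (q - 1))
    (hb : b ≥ (q-1)*((N:ℝ)-1) - ((N:ℝ) - ((N:ℝ)-1)*q)) :
    (∀ t : ℝ, 0 < t →
      ((1+t) ^ (1/b) - 1) * (1+t) ^ ((q-1)*((N:ℝ)/a - ((N:ℝ)-1)/b)) /
          t ^ ((q-1)*(N:ℝ)/a) > 1/b) ∧
    sInf { r | ∃ t : ℝ, 0 < t ∧
        r = ((1+t) ^ (1/b) - 1) * (1+t) ^ ((q-1)*((N:ℝ)/a - ((N:ℝ)-1)/b)) /
              t ^ ((q-1)*(N:ℝ)/a) } = 1/b ∧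
    ¬ ∃ t : ℝ, 0 < t ∧
        ((1+t) ^ (1/b) - 1) * (1+t) ^ ((q-1)*((N:ℝ)/a - ((N:ℝ)-1)/b)) /
            t ^ ((q-1)*(N:ℝ)/a) =
          sInf { r | ∃ t : ℝ, 0 < t ∧
            r = ((1+t) ^ (1/b) - 1) * (1+t) ^ ((q-1)*((N:ℝ)/a - ((N:ℝ)-1)/b)) /
                  t ^ ((q-1)*(N:ℝ)/a) } := by
  have hN2 : (2:ℝ) ≤ (N:ℝ) := by exact_mod_cast hN
  have hNm1 : (0:ℝ) < (N:ℝ) - 1 := by linarith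
  have hq1' : (1:ℝ) < q := by
    have h1 : (1:ℝ) < (2*(N:ℝ)-1) / (2*((N:ℝ)-1)) := by
      rw [lt_div_iff₀ (by linarith)]; linarith
    linarith
  have hq1'' : 2*(N:ℝ) - 1 < q * (2*((N:ℝ)-1)) := (div_lt_iff₀ (by linarith)).mp hq1
  have hb0pos : (0:ℝ) < (q-1)*((N:ℝ)-1) - ((N:ℝ) - ((N:ℝ)-1)*q) := by nlinarith
  have hbpos : (0:ℝ) < b := lt_of_lt_of_le hb0pos hb
  have hqN : (0:ℝ) < (N:ℝ) - ((N:ℝ)-1)*q := by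
    have := (lt_div_iff₀ hNm1).mp hq2; nlinarith
  have hNpos : (0:ℝ) < (N:ℝ) := by linarith
  have hbne : b ≠ 0 := hbpos.ne'
  have hNne : (N:ℝ) ≠ 0 := hNpos.ne'
  have hqne : q - 1 ≠ 0 := by linarith
  have hane : a ≠ 0 := by rw [ha]; exact mul_ne_zero hNne hqne
  set α : ℝ := 1 + ((N:ℝ) - ((N:ℝ)-1)*q)/b with hαdef
  set β : ℝ := 1 - (q-1)*((N:ℝ)-1)/b with hβdef
  have hα : 1 < α := by
    have : 0 < ((N:ℝ) - ((N:ℝ)-1)*q)/b := by positivity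
    simp only [hαdef]; linarith
  have hβ : β < 1 := by
    have : 0 < (q-1)*((N:ℝ)-1)/b := by
      apply div_pos (by nlinarith) hbpos
    simp only [hβdef]; linarith
  have hd : α - β = 1/b := by
    simp only [hαdef, hβdef]; field_simp; ring
  have hs : 1 ≤ α + β := by
    have hx : ((q-1)*((N:ℝ)-1) - ((N:ℝ)-((N:ℝ)-1)*q))/b ≤ 1 := (div_le_one hbpos).mpr hb
    have heq : α + β = 2 - ((q-1)*((N:ℝ)-1) - ((N:ℝ)-((N:ℝ)-1)*q))/b := by
      simp only [hαdef, hβdef, sub_div]; ring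
    rw [heq]; linarith
  have hE3 : (q-1)*(N:ℝ)/a = 1 := by
    rw [ha, div_eq_one_iff_eq (mul_ne_zero hNne hqne)]; ring
  have hE2 : (q-1)*((N:ℝ)/a - ((N:ℝ)-1)/b) = β := by
    rw [hβdef, ha]; field_simp
  have hphi := aux_phi_pos α β b hbpos hα hβ hd hs
  -- rewrite g
  have hgform : ∀ t : ℝ, 0 < t →
      ((1+t) ^ (1/b) - 1) * (1+t) ^ ((q-1)*((N:ℝ)/a - ((N:ℝ)-1)/b)) /
          t ^ ((q-1)*(N:ℝ)/a) = ((1+t) ^ α - (1+t) ^ β) / t := by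
    intro t ht
    have h0t : (0:ℝ) < 1 + t := by linarith
    rw [hE2, hE3, Real.rpow_one]
    congr 1
    have : (1+t) ^ α = (1+t) ^ (1/b) * (1+t) ^ β := by
      rw [← Real.rpow_add h0t]
      congr 1
      simp only [hαdef, hβdef]; field_simp; ring
    rw [this]; ring
  have part1 : ∀ t : ℝ, 0 < t →
      ((1+t) ^ (1/b) - 1) * (1+t) ^ ((q-1)*((N:ℝ)/a - ((N:ℝ)-1)/b)) /
          t ^ ((q-1)*(N:ℝ)/a) > 1/b := by
    intro t ht
    rw [hgform t ht, gt_iff_lt, lt_div_iff₀ ht]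
    have := hphi t ht
    have hbt : 1/b * t = t/b := by ring
    linarith [hbt ▸ this]
  set S := { r | ∃ t : ℝ, 0 < t ∧
      r = ((1+t) ^ (1/b) - 1) * (1+t) ^ ((q-1)*((N:ℝ)/a - ((N:ℝ)-1)/b)) /
            t ^ ((q-1)*(N:ℝ)/a) } with hS
  have hmem : ∀ t : ℝ, 0 < t →
      ((1+t) ^ (1/b) - 1) * (1+t) ^ ((q-1)*((N:ℝ)/a - ((N:ℝ)-1)/b)) /
          t ^ ((q-1)*(N:ℝ)/a) ∈ S := fun t ht => ⟨t, ht, rfl⟩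
  have hlb : ∀ r ∈ S, 1/b ≤ r := by
    rintro r ⟨t, ht, rfl⟩; exact (part1 t ht).le
  have hbdd : BddBelow S := ⟨1/b, hlb⟩
  have hge : 1/b ≤ sInf S := le_csInf ⟨_, hmem 1 one_pos⟩ hlb
  set F : ℝ → ℝ := fun x => (1+x) ^ α - (1+x) ^ β with hF
  have hFd : HasDerivAt F (1/b) 0 := by
    have h1 := aux_hasDeriv α 0 (by norm_num)
    have h2 := aux_hasDeriv β 0 (by norm_num)
    have := h1.sub h2
    simp only [add_zero, Real.one_rpow, mul_one] at this
    rw [← hd]; exact this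
  have htend : Tendsto (slope F 0) (𝓝[>] 0) (𝓝 (1/b)) := by
    have := hasDerivAt_iff_tendsto_slope.mp hFd
    exact this.mono_left (nhdsWithin_mono 0 (fun x hx => ne_of_gt hx))
  have hev : ∀ᶠ t in 𝓝[>] (0:ℝ), sInf S ≤ slope F 0 t := by
    filter_upwards [self_mem_nhdsWithin] with t ht
    have ht' : (0:ℝ) < t := ht
    have hslope : slope F 0 t =
        ((1+t) ^ (1/b) - 1) * (1+t) ^ ((q-1)*((N:ℝ)/a - ((N:ℝ)-1)/b)) /
          t ^ ((q-1)*(N:ℝ)/a) := by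
      rw [hgform t ht', slope_def_field, hF]
      simp [div_eq_div_iff ht'.ne']
    rw [hslope]
    exact csInf_le hbdd (hmem t ht')
  have hinf : sInf S = 1/b := le_antisymm (ge_of_tendsto htend hev) hge
  refine ⟨part1, hinf, ?_⟩
  rintro ⟨t, ht, heq⟩
  rw [hinf] at heq
  exact absurd heq (ne_of_gt (part1 t ht))
end

section
/- Let N ≥ 2, q with (2N-1)/(2(N-1)) < q < N/(N-1), a = N(q-1), and 0 < b < b₀ := (q-1)(N-1) - (N - (N-1)q). Then the function g(t) := ((1+t)^{1/b} - 1)(1+t)^{1 - (q-1)(N-1)/b} / t on (0, ∞) attains its infimum at some t₃ > 0 with g(t₃) < 1/b, so that 0 < inf_{t>0} g(t) < 1/b. -/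
open Real Filter Topology Set

private noncomputable def gA (b c t : ℝ) : ℝ := ((1+t) ^ (1/b) - 1) * (1+t) ^ c / t

private noncomputable def phiA (b c t : ℝ) : ℝ := b*(1+t)^(c+1/b) - b*(1+t)^c - t

private noncomputable def psiA (b c t : ℝ) : ℝ :=
  b*(c+1/b)*(1+t)^(c+1/b-1) - b*c*(1+t)^(c-1) - 1

private lemma hasDerivAt_one_add_rpow (p t : ℝ) (ht : 0 < 1 + t) :
    HasDerivAt (fun s : ℝ => (1 + s) ^ p) (p * (1 + t) ^ (p - 1)) t := by
  have h1 : HasDerivAt (fun s : ℝ => 1 + s) 1 t := (hasDerivAt_id t).const_add 1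
  have h2 := h1.rpow_const (p := p) (Or.inl ht.ne')
  simpa using h2

private lemma aux_main (b c : ℝ) (hb : 0 < b) (hα : 1 < c + 1/b) (hs : 2*c + 1/b < 1) :
    ∃ t₃ : ℝ, 0 < t₃ ∧
      (∀ t : ℝ, 0 < t → gA b c t₃ ≤ gA b c t) ∧
      gA b c t₃ < 1/b ∧
      0 < sInf { r | ∃ t : ℝ, 0 < t ∧ r = gA b c t } ∧
      sInf { r | ∃ t : ℝ, 0 < t ∧ r = gA b c t } < 1/b := by
  have hb' : (0:ℝ) < 1/b := by positivity
  -- relation between g and φ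
  have hgφ : ∀ t : ℝ, 0 < t → gA b c t - 1/b = phiA b c t / (b*t) := by
    intro t ht
    have h1t : (0:ℝ) < 1 + t := by linarith
    have hpow : (1+t)^(1/b) * (1+t)^c = (1+t)^(c+1/b) := by
      rw [← Real.rpow_add h1t]; ring_nf
    simp only [gA, phiA]
    generalize (1+t)^(c+1/b) = A at hpow ⊢
    generalize (1+t)^c = B at hpow ⊢
    generalize (1+t)^(1/b) = C at hpow ⊢
    field_simp
    linear_combination b * hpow
  -- positivity of g
  have hgpos : ∀ t : ℝ, 0 < t → 0 < gA b c t := by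
    intro t ht
    have h1t : (0:ℝ) < 1 + t := by linarith
    have h1 : 1 < (1+t)^(1/b) :=
      (Real.one_lt_rpow_iff_of_pos h1t).mpr (Or.inl ⟨by linarith, hb'⟩)
    have h2 : 0 < (1+t)^c := Real.rpow_pos_of_pos h1t c
    exact div_pos (mul_pos (by linarith) h2) ht
  -- derivative of φ
  have hφd : ∀ t : ℝ, 0 < 1 + t → HasDerivAt (phiA b c) (psiA b c t) t := by
    intro t ht
    have h1 := (hasDerivAt_one_add_rpow (c+1/b) t ht).const_mul b
    have h2 := (hasDerivAt_one_add_rpow c t ht).const_mul b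
    have h3 := (h1.sub h2).sub (hasDerivAt_id t)
    convert h3 using 1
    · rfl
    · rfl
    · rfl
    simp only [psiA]; ring
  -- ψ 0 = 0
  have hψ0 : psiA b c 0 = 0 := by
    simp only [psiA, add_zero, Real.one_rpow]
    field_simp
    ring
  -- derivative of ψ at 0
  have hψd0 : HasDerivAt (psiA b c) (2*c + 1/b - 1) 0 := by
    have h1 := (hasDerivAt_one_add_rpow (c+1/b-1) 0 (by norm_num)).const_mul (b*(c+1/b))
    have h2 := (hasDerivAt_one_add_rpow (c-1) 0 (by norm_num)).const_mul (b*c)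
    have h3 := (h1.sub h2).sub_const 1
    have h4 : (b*(c+1/b)) * ((c+1/b-1) * (1+(0:ℝ)) ^ (c+1/b-1-1)) -
        (b*c) * ((c-1) * (1+(0:ℝ)) ^ (c-1-1)) = 2*c + 1/b - 1 := by
      simp only [add_zero, Real.one_rpow]
      field_simp
      ring
    rw [h4] at h3
    exact h3
  -- ψ negative on a right neighborhood of 0
  have hψneg : ∀ᶠ t in 𝓝[>] (0:ℝ), psiA b c t < 0 := by
    have hslope : Tendsto (slope (psiA b c) 0) (𝓝[≠] (0:ℝ)) (𝓝 (2*c + 1/b - 1)) :=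
      hasDerivAt_iff_tendsto_slope.mp hψd0
    have h1 : Tendsto (slope (psiA b c) 0) (𝓝[>] (0:ℝ)) (𝓝 (2*c + 1/b - 1)) :=
      hslope.mono_left (nhdsWithin_mono 0 (fun x hx => ne_of_gt hx))
    have h2 : ∀ᶠ t in 𝓝[>] (0:ℝ), slope (psiA b c) 0 t < 0 :=
      h1.eventually_lt_const (by linarith)
    filter_upwards [h2, self_mem_nhdsWithin] with t hst ht
    rw [slope_def_field, hψ0, sub_zero, sub_zero] at hst
    rcases div_neg_iff.mp hst with ⟨_, h⟩ | ⟨h, _⟩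
    · exact absurd (mem_Ioi.mp ht) (not_lt.mpr h.le)
    · exact h
  obtain ⟨δ, hδ0, hδ⟩ : ∃ δ ∈ Ioi (0:ℝ), ∀ t ∈ Ioc (0:ℝ) δ, psiA b c t < 0 := by
    rcases mem_nhdsGT_iff_exists_Ioc_subset.mp hψneg with ⟨u, hu, hsub⟩
    exact ⟨u, hu, fun t ht => hsub ht⟩
  have hδpos : (0:ℝ) < δ := hδ0
  -- φ strictly decreasing on [0, δ]
  have hanti : StrictAntiOn (phiA b c) (Icc 0 δ) := by
    apply strictAntiOn_of_deriv_neg (convex_Icc _ _)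
    · intro x hx
      exact ((hφd x (by linarith [hx.1])).continuousAt).continuousWithinAt
    · intro x hx
      rw [interior_Icc] at hx
      rw [(hφd x (by linarith [hx.1])).deriv]
      exact hδ x ⟨hx.1, hx.2.le⟩
  have hφ0 : phiA b c 0 = 0 := by simp [phiA]
  have hφδ : phiA b c δ < 0 := by
    have := hanti (left_mem_Icc.mpr hδpos.le) (right_mem_Icc.mpr hδpos.le) hδpos
    rw [hφ0] at this; exact this
  have hgδ : gA b c δ < 1/b := by
    have h1 := hgφ δ hδpos
    have h2 : phiA b c δ / (b*δ) < 0 := div_neg_of_neg_of_pos hφδ (by positivity)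
    linarith
  -- limit of g at 0⁺ is 1/b
  have hlim0 : Tendsto (gA b c) (𝓝[>] (0:ℝ)) (𝓝 (1/b)) := by
    have hf : HasDerivAt (fun t : ℝ => (1+t) ^ (1/b)) (1/b) 0 := by
      have h := hasDerivAt_one_add_rpow (1/b) 0 (by norm_num)
      simpa using h
    have h1 : Tendsto (slope (fun t : ℝ => (1+t)^(1/b)) 0) (𝓝[>] (0:ℝ)) (𝓝 (1/b)) :=
      (hasDerivAt_iff_tendsto_slope.mp hf).mono_left
        (nhdsWithin_mono 0 (fun x hx => ne_of_gt hx))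
    have h2 : Tendsto (fun t : ℝ => (1+t)^c) (𝓝[>] (0:ℝ)) (𝓝 1) := by
      have hc : ContinuousAt (fun t : ℝ => (1+t)^c) 0 := by
        apply ContinuousAt.rpow_const
        · exact (continuous_const.add continuous_id).continuousAt
        · left; norm_num
      have h3 := hc.tendsto
      have h4 : (1+(0:ℝ))^c = 1 := by norm_num
      rw [h4] at h3
      exact h3.mono_left nhdsWithin_le_nhds
    have h5 := h1.mul h2
    rw [mul_one] at h5
    apply h5.congr'
    filter_upwards [self_mem_nhdsWithin] with t ht
    rw [slope_def_field]
    simp only [gA, add_zero, Real.one_rpow, sub_zero]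
    ring
  -- limit of g at ∞ is ∞
  have hαpos : 0 < c + 1/b - 1 := by linarith
  have htop : Tendsto (gA b c) atTop atTop := by
    have hbase : Tendsto (fun t : ℝ => (1/2) * (1+t)^(c+1/b-1)) atTop atTop := by
      apply Tendsto.const_mul_atTop (by norm_num)
      exact (tendsto_rpow_atTop hαpos).comp (tendsto_atTop_add_const_left _ 1 tendsto_id)
    apply tendsto_atTop_mono' atTop _ hbase
    filter_upwards [eventually_ge_atTop (max 1 ((2:ℝ)^b))] with t ht
    have ht1 : (1:ℝ) ≤ t := le_trans (le_max_left _ _) ht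
    have ht0 : (0:ℝ) < t := by linarith
    have h1t : (0:ℝ) < 1 + t := by linarith
    have h2b : (2:ℝ)^b ≤ 1 + t := by
      have := le_trans (le_max_right _ _) ht; linarith
    have hA : (2:ℝ) ≤ (1+t)^(1/b) := by
      have h1 : ((2:ℝ)^b)^(1/b) ≤ (1+t)^(1/b) :=
        Real.rpow_le_rpow (Real.rpow_pos_of_pos two_pos b).le h2b hb'.le
      have h2 : ((2:ℝ)^b)^(1/b) = 2 := by
        rw [← Real.rpow_mul (by norm_num : (0:ℝ) ≤ 2), mul_one_div_cancel hb.ne',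
          Real.rpow_one]
      linarith
    have hc0 : 0 < (1+t)^c := Real.rpow_pos_of_pos h1t c
    have hcb : 0 < (1+t)^(1/b) := Real.rpow_pos_of_pos h1t (1/b)
    have key1 : (1/2) * (1+t)^(1/b) ≤ (1+t)^(1/b) - 1 := by linarith
    calc (1/2) * (1+t)^(c+1/b-1)
        = (1/2) * ((1+t)^(c+1/b) / (1+t)) := by
          rw [Real.rpow_sub h1t, Real.rpow_one]
      _ ≤ (1/2) * ((1+t)^(c+1/b) / t) := by
          apply mul_le_mul_of_nonneg_left _ (by norm_num)
          exact div_le_div_of_nonneg_left (Real.rpow_pos_of_pos h1t _).le ht0 (by linarith)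
      _ = ((1/2) * (1+t)^(1/b)) * (1+t)^c / t := by
          rw [show c + 1/b = 1/b + c by ring, Real.rpow_add h1t]; ring
      _ ≤ ((1+t)^(1/b) - 1) * (1+t)^c / t := by
          gcongr
      _ = gA b c t := rfl
  -- points where g exceeds g δ near 0 and at infinity
  obtain ⟨u, hu0, hu⟩ : ∃ u ∈ Ioi (0:ℝ), ∀ t ∈ Ioc (0:ℝ) u, gA b c δ < gA b c t := by
    have h := hlim0.eventually_const_lt hgδ
    rcases mem_nhdsGT_iff_exists_Ioc_subset.mp h with ⟨u, hu, hsub⟩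
    exact ⟨u, hu, fun t ht => hsub ht⟩
  obtain ⟨M, hM⟩ : ∃ M : ℝ, ∀ t ≥ M, gA b c δ < gA b c t :=
    eventually_atTop.mp (htop.eventually_gt_atTop (gA b c δ))
  set a1 : ℝ := min u δ with ha1def
  set a2 : ℝ := max M δ with ha2def
  have ha1 : 0 < a1 := lt_min hu0 hδpos
  have hδmem : δ ∈ Icc a1 a2 := ⟨min_le_right _ _, le_max_right _ _⟩
  have hgcont : ContinuousOn (gA b c) (Icc a1 a2) := by
    intro x hx
    have hx0 : 0 < x := lt_of_lt_of_le ha1 hx.1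
    have h1x : (0:ℝ) < 1 + x := by linarith
    have c1 : ContinuousAt (fun t : ℝ => (1+t)^(1/b)) x :=
      ContinuousAt.rpow_const (by fun_prop) (Or.inl h1x.ne')
    have c2 : ContinuousAt (fun t : ℝ => (1+t)^c) x :=
      ContinuousAt.rpow_const (by fun_prop) (Or.inl h1x.ne')
    have c3 : ContinuousAt (gA b c) x :=
      ((c1.sub continuousAt_const).mul c2).div continuousAt_id hx0.ne'
    exact c3.continuousWithinAt
  obtain ⟨t₃, ht₃mem, ht₃min⟩ := isCompact_Icc.exists_isMinOn ⟨δ, hδmem⟩ hgcont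
  have ht₃pos : 0 < t₃ := lt_of_lt_of_le ha1 ht₃mem.1
  have hδ3 : gA b c t₃ ≤ gA b c δ := isMinOn_iff.mp ht₃min δ hδmem
  have hmin : ∀ t : ℝ, 0 < t → gA b c t₃ ≤ gA b c t := by
    intro t ht
    rcases le_or_gt t a2 with h2 | h2
    · rcases le_or_gt a1 t with h1 | h1
      · exact isMinOn_iff.mp ht₃min t ⟨h1, h2⟩
      · have h3 : gA b c δ < gA b c t :=
          hu t ⟨ht, le_trans h1.le (min_le_left _ _)⟩
        linarith
    · have h3 : gA b c δ < gA b c t := hM t (le_trans (le_max_left _ _) h2.le)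
      linarith
  have hlt : gA b c t₃ < 1/b := lt_of_le_of_lt hδ3 hgδ
  have hmem : gA b c t₃ ∈ { r | ∃ t : ℝ, 0 < t ∧ r = gA b c t } := ⟨t₃, ht₃pos, rfl⟩
  have hlb : ∀ r ∈ { r | ∃ t : ℝ, 0 < t ∧ r = gA b c t }, gA b c t₃ ≤ r := by
    rintro r ⟨t, ht, rfl⟩; exact hmin t ht
  have hSinf : sInf { r | ∃ t : ℝ, 0 < t ∧ r = gA b c t } = gA b c t₃ :=
    le_antisymm (csInf_le ⟨gA b c t₃, hlb⟩ hmem) (le_csInf ⟨_, hmem⟩ hlb)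
  refine ⟨t₃, ht₃pos, hmin, hlt, ?_, ?_⟩
  · rw [hSinf]; exact hgpos t₃ ht₃pos
  · rw [hSinf]; exact hlt

/-- in the case `a = N(q-1)`, `(2N-1)/(2(N-1)) < q < N/(N-1)`,
`0 < b < b₀`, the function `g` attains its infimum at some `t₃ > 0` with
`g(t₃) < 1/b`, so `0 < inf g < 1/b`. -/
theorem g_attains_inf_below_inv_b (N : ℕ) (hN : 2 ≤ N) (q b : ℝ)
    (hq1 : (2*(N:ℝ)-1) / (2*((N:ℝ)-1)) < q) (hq2 : q < (N : ℝ) / ((N : ℝ) - 1))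
    (hb0 : 0 < b) (hb : b < (q-1)*((N:ℝ)-1) - ((N:ℝ) - ((N:ℝ)-1)*q)) :
    ∃ t₃ : ℝ, 0 < t₃ ∧
      (∀ t : ℝ, 0 < t →
        ((1+t₃) ^ (1/b) - 1) * (1+t₃) ^ (1 - (q-1)*((N:ℝ)-1)/b) / t₃ ≤
          ((1+t) ^ (1/b) - 1) * (1+t) ^ (1 - (q-1)*((N:ℝ)-1)/b) / t) ∧
      ((1+t₃) ^ (1/b) - 1) * (1+t₃) ^ (1 - (q-1)*((N:ℝ)-1)/b) / t₃ < 1/b ∧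
      0 < sInf { r | ∃ t : ℝ, 0 < t ∧
          r = ((1+t) ^ (1/b) - 1) * (1+t) ^ (1 - (q-1)*((N:ℝ)-1)/b) / t } ∧
      sInf { r | ∃ t : ℝ, 0 < t ∧
          r = ((1+t) ^ (1/b) - 1) * (1+t) ^ (1 - (q-1)*((N:ℝ)-1)/b) / t } < 1/b := by
  have hN1 : (1:ℝ) < (N:ℝ) := by
    have : (2:ℝ) ≤ (N:ℝ) := by exact_mod_cast hN
    linarith
  have hNm : (0:ℝ) < (N:ℝ) - 1 := by linarith
  set c : ℝ := 1 - (q-1)*((N:ℝ)-1)/b with hcdef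
  have hq2' : q * ((N:ℝ)-1) < N := by
    rw [lt_div_iff₀ hNm] at hq2; linarith
  have hX : (q-1)*((N:ℝ)-1) < 1 := by nlinarith
  have hXb : b < 2*((q-1)*((N:ℝ)-1)) - 1 := by nlinarith
  have h1 : 1 < c + 1/b := by
    have key : c + 1/b = 1 + (1 - (q-1)*((N:ℝ)-1))/b := by
      rw [hcdef]; ring
    have hp : 0 < (1 - (q-1)*((N:ℝ)-1))/b := div_pos (by linarith) hb0
    linarith
  have h2 : 2*c + 1/b < 1 := by
    have key : 2*c + 1/b = 2 + (1 - 2*((q-1)*((N:ℝ)-1)))/b := by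
      rw [hcdef]; ring
    have hp : (1 - 2*((q-1)*((N:ℝ)-1)))/b < -1 := by
      rw [div_lt_iff₀ hb0]; linarith
    linarith
  exact aux_main b c hb0 h1 h2
end

section
/- Let N ≥ 2, 1 < q ≤ (2N-1)/(2(N-1)), a = N(q-1), b > 0. Then g(t) := ((1+t)^{1/b} - 1)(1+t)^{1 - (q-1)(N-1)/b} / t > 1/b for all t > 0, i.e., the infimum inf_{t>0} g(t) = 1/b is not attained. -/
open Real Filter Topology Set

/-- for `1 < q ≤ (2N-1)/(2(N-1))` and `a = N(q-1)`,
`g(t) > 1/b` for all `t > 0`; the infimum `1/b` is not attained. -/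
theorem g_gt_inv_b_small_q (N : ℕ) (hN : 2 ≤ N) (q b : ℝ) (hq1 : 1 < q)
    (hq2 : q ≤ (2*(N:ℝ)-1) / (2*((N:ℝ)-1))) (hb : 0 < b) :
    (∀ t : ℝ, 0 < t →
      ((1+t) ^ (1/b) - 1) * (1+t) ^ (1 - (q-1)*((N:ℝ)-1)/b) / t > 1/b) ∧
    sInf { r | ∃ t : ℝ, 0 < t ∧
        r = ((1+t) ^ (1/b) - 1) * (1+t) ^ (1 - (q-1)*((N:ℝ)-1)/b) / t } = 1/b ∧
    ¬ ∃ t : ℝ, 0 < t ∧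
        ((1+t) ^ (1/b) - 1) * (1+t) ^ (1 - (q-1)*((N:ℝ)-1)/b) / t =
          sInf { r | ∃ t : ℝ, 0 < t ∧
            r = ((1+t) ^ (1/b) - 1) * (1+t) ^ (1 - (q-1)*((N:ℝ)-1)/b) / t } := by
  have hN2 : (2:ℝ) ≤ (N:ℝ) := by exact_mod_cast hN
  set c : ℝ := (q-1)*((N:ℝ)-1) with hc_def
  have hc0 : 0 < c := mul_pos (by linarith) (by linarith)
  have hc2 : c ≤ 1/2 := by
    have h2N : 0 < 2*((N:ℝ)-1) := by linarith
    have hq2' : q * (2*((N:ℝ)-1)) ≤ 2*(N:ℝ)-1 := (le_div_iff₀ h2N).mp hq2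
    nlinarith
  set R : ℝ := 1 - c/b with hRdef
  set p : ℝ := 1/b + R with hpdef
  clear_value c R p
  have hb' : (0:ℝ) < 1/b := by positivity
  have hp1 : 1 < p := by
    have h1 : 0 < (1-c)/b := div_pos (by linarith) hb
    have h2 : 1/b - c/b = (1-c)/b := by ring
    rw [hpdef, hRdef]; linarith
  have hpR : p - R = 1/b := by rw [hpdef]; ring
  have hsum : 1 ≤ p + R - 1 := by
    have h1 : 0 ≤ (1-2*c)/b := div_nonneg (by linarith) hb.le
    have h2 : 1/b - 2*(c/b) = (1-2*c)/b := by ring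
    rw [hpdef, hRdef]; linarith
  have hkey : R*(R-1) < p*(p-1) := by
    have hid : p*(p-1) - R*(R-1) = (1/b)*(p+R-1) := by rw [← hpR]; ring
    have h3 : 1/b * 1 ≤ 1/b * (p+R-1) := mul_le_mul_of_nonneg_left hsum hb'.le
    linarith
  -- derivative helper
  have hd1 : ∀ (e : ℝ) (t : ℝ), -1 < t →
      HasDerivAt (fun s : ℝ => (1+s)^e) (e*(1+t)^(e-1)) t := by
    intro e t ht
    have h0 : (1:ℝ)+t ≠ 0 := by linarith
    have h := (Real.hasDerivAt_rpow_const (x := 1+t) (p := e) (Or.inl h0)).comp t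
      ((hasDerivAt_id t).const_add 1)
    exact h.congr_deriv (by ring)
  -- second function φ1 = derivative of φ
  have hφ1d : ∀ t : ℝ, -1 < t →
      HasDerivAt (fun s : ℝ => p*(1+s)^(p-1) - R*(1+s)^(R-1) - 1/b)
        (p*(p-1)*(1+t)^(p-2) - R*(R-1)*(1+t)^(R-2)) t := by
    intro t ht
    have h := (((hd1 (p-1) t ht).const_mul p).sub ((hd1 (R-1) t ht).const_mul R)).sub_const (1/b)
    have e1 : p - 1 - 1 = p - 2 := by ring
    have e2 : R - 1 - 1 = R - 2 := by ring
    rw [e1, e2] at h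
    exact h.congr_deriv (by ring)
  have hφ2pos : ∀ t : ℝ, 0 ≤ t →
      0 < p*(p-1)*(1+t)^(p-2) - R*(R-1)*(1+t)^(R-2) := by
    intro t ht
    have h1t : (1:ℝ) ≤ 1 + t := by linarith
    have hpow : (1+t)^(R-2) ≤ (1+t)^(p-2) :=
      Real.rpow_le_rpow_of_exponent_le h1t (by nlinarith [hpR, hb'])
    have hposR : 0 < (1+t)^(R-2) := Real.rpow_pos_of_pos (by linarith) _
    have hpp : 0 < p*(p-1) := mul_pos (by linarith) (by linarith)
    have h1 := mul_le_mul_of_nonneg_left hpow hpp.le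
    have h2 := mul_pos (sub_pos.mpr hkey) hposR
    nlinarith
  -- φ1 > 0 on (0,∞)
  have hmono1 : StrictMonoOn (fun s : ℝ => p*(1+s)^(p-1) - R*(1+s)^(R-1) - 1/b) (Ici (0:ℝ)) := by
    apply strictMonoOn_of_deriv_pos (convex_Ici 0)
    · intro x hx
      exact (hφ1d x (by have := mem_Ici.mp hx; linarith)).continuousAt.continuousWithinAt
    · intro x hx
      rw [interior_Ici] at hx
      have hx' := mem_Ioi.mp hx
      rw [(hφ1d x (by linarith)).deriv]
      exact hφ2pos x hx'.le
  have hφ1pos : ∀ t : ℝ, 0 < t → 0 < p*(1+t)^(p-1) - R*(1+t)^(R-1) - 1/b := by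
    intro t ht
    have h0 : p*((1:ℝ)+0)^(p-1) - R*((1:ℝ)+0)^(R-1) - 1/b = 0 := by
      simp [Real.one_rpow]; rw [hpdef]; ring
    have := hmono1 (mem_Ici.mpr le_rfl) (mem_Ici.mpr ht.le) ht
    simp only at this
    linarith [h0, this]
  -- φ > 0 on (0,∞)
  have hφd : ∀ t : ℝ, -1 < t →
      HasDerivAt (fun s : ℝ => (1+s)^p - (1+s)^R - s/b)
        (p*(1+t)^(p-1) - R*(1+t)^(R-1) - 1/b) t := by
    intro t ht
    exact ((hd1 p t ht).sub (hd1 R t ht)).sub ((hasDerivAt_id t).div_const b)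
  have hmono : StrictMonoOn (fun s : ℝ => (1+s)^p - (1+s)^R - s/b) (Ici (0:ℝ)) := by
    apply strictMonoOn_of_deriv_pos (convex_Ici 0)
    · intro x hx
      exact (hφd x (by have := mem_Ici.mp hx; linarith)).continuousAt.continuousWithinAt
    · intro x hx
      rw [interior_Ici] at hx
      have hx' := mem_Ioi.mp hx
      rw [(hφd x (by linarith)).deriv]
      exact hφ1pos x hx'
  have hφpos : ∀ t : ℝ, 0 < t → 0 < (1+t)^p - (1+t)^R - t/b := by
    intro t ht
    have h0 : ((1:ℝ)+0)^p - ((1:ℝ)+0)^R - 0/b = 0 := by simp [Real.one_rpow]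
    have := hmono (mem_Ici.mpr le_rfl) (mem_Ici.mpr ht.le) ht
    simp only at this
    linarith [h0, this]
  -- Part 1
  have key : ∀ t : ℝ, 0 < t → ((1+t)^(1/b) - 1) * (1+t)^R / t > 1/b := by
    intro t ht
    rw [gt_iff_lt, lt_div_iff₀ ht]
    have hsplit : (1+t)^p = (1+t)^(1/b) * (1+t)^R := by
      rw [hpdef, Real.rpow_add (by linarith)]
    have hφt := hφpos t ht
    rw [hsplit] at hφt
    have e1 : 1/b * t = t/b := by ring
    have e2 : ((1+t)^(1/b)-1)*(1+t)^R = (1+t)^(1/b)*(1+t)^R - (1+t)^R := by ring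
    linarith
  -- the limit g(t) → 1/b as t → 0⁺
  have htend : Tendsto (fun t : ℝ => ((1+t)^(1/b) - 1) * (1+t)^R / t)
      (𝓝[>] (0:ℝ)) (𝓝 (1/b)) := by
    have h1 : Tendsto (fun t : ℝ => ((1+t)^(1/b) - 1) / t) (𝓝[>] (0:ℝ)) (𝓝 (1/b)) := by
      have hD : HasDerivAt (fun s : ℝ => (1+s)^(1/b)) (1/b) 0 := by
        have := hd1 (1/b) 0 (by norm_num)
        simpa using this
      have hs := hasDerivAt_iff_tendsto_slope.mp hD
      have hmono' : 𝓝[>] (0:ℝ) ≤ 𝓝[≠] (0:ℝ) :=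
        nhdsWithin_mono _ (fun x hx => ne_of_gt hx)
      refine (hs.mono_left hmono').congr (fun x => ?_)
      simp [slope_def_field]
    have h2 : Tendsto (fun t : ℝ => (1+t)^R) (𝓝[>] (0:ℝ)) (𝓝 1) := by
      have hc : ContinuousAt (fun t : ℝ => (1+t)^R) 0 := by
        apply ContinuousAt.rpow_const
        · fun_prop
        · left; norm_num
      have h := hc.tendsto.mono_left (nhdsWithin_le_nhds (s := Ioi (0:ℝ)))
      simpa using h
    have h := h1.mul h2
    rw [mul_one] at h
    exact h.congr (fun x => by ring)
  set S := { r | ∃ t : ℝ, 0 < t ∧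
      r = ((1+t) ^ (1/b) - 1) * (1+t) ^ R / t } with hS
  have hSne : S.Nonempty := ⟨_, 1, one_pos, rfl⟩
  have hlb : ∀ x ∈ S, 1/b ≤ x := by
    rintro x ⟨t, ht, rfl⟩
    exact (key t ht).le
  have hglb : IsGLB S (1/b) := by
    constructor
    · exact hlb
    · intro m hm
      refine ge_of_tendsto htend ?_
      filter_upwards [self_mem_nhdsWithin] with t ht
      exact hm ⟨t, ht, rfl⟩
  have hsinf : sInf S = 1/b := hglb.csInf_eq hSne
  refine ⟨key, hsinf, ?_⟩
  rintro ⟨t, ht, hEq⟩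
  rw [hsinf] at hEq
  exact absurd hEq (ne_of_gt (key t ht))
end

section
/- Let N ≥ 2, 1* := N/(N-1), a > 1*, b > 0, and h(t) := (1+t)^{1*/a - 1/b} / ((1+t)^{1*/a} - t^{1*/a}) for t > 0. Then: if b > 1, sup_{t>0} h(t) = ∞; if b = 1, h is strictly increasing on (0,∞) with h(t) → 1 as t → 0⁺ and h(t) → a/1* as t → ∞, so sup_{t>0} h(t) = a/1* and is not attained; if b < 1, h attains its supremum at a unique interior point t₁ > 0 with 1 < h(t₁) < ∞. -/
open Real Filter Topology Set

/-- The auxiliary function `h` of the critical case. -/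
noncomputable def hFun (os a b t : ℝ) : ℝ :=
  (1+t) ^ (os/a - 1/b) / ((1+t) ^ (os/a) - t ^ (os/a))

/-! ### Auxiliary convexity lemmas -/

/-- `x ↦ x ^ p` is strictly convex on `(0, ∞)` for `p < 0`. -/
lemma myStrictConvexOn_rpow_neg {p : ℝ} (hp : p < 0) :
    StrictConvexOn ℝ (Ioi (0:ℝ)) fun x : ℝ => x ^ p := by
  refine ⟨convex_Ioi _, fun x hx y hy hxy u v hu hv huv => ?_⟩
  simp only [smul_eq_mul] at *
  have hx' : (0:ℝ) < x := hx
  have hy' : (0:ℝ) < y := hy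
  have hxy' : (0:ℝ) < u*x + v*y := by positivity
  have hlog : u * Real.log x + v * Real.log y < Real.log (u*x+v*y) := by
    have := strictConcaveOn_log_Ioi.2 hx hy hxy hu hv huv
    simpa [smul_eq_mul] using this
  have key : Real.exp (u * (p * Real.log x) + v * (p * Real.log y))
      ≤ u * Real.exp (p * Real.log x) + v * Real.exp (p * Real.log y) := by
    have := convexOn_exp.2 (mem_univ (p * Real.log x)) (mem_univ (p * Real.log y))
      hu.le hv.le huv
    simpa [smul_eq_mul] using this
  calc (u*x+v*y) ^ p = Real.exp (p * Real.log (u*x+v*y)) := by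
        rw [rpow_def_of_pos hxy']; ring_nf
    _ < Real.exp (p * (u * Real.log x + v * Real.log y)) := by
        apply Real.exp_lt_exp.2
        exact mul_lt_mul_of_neg_left hlog hp
    _ = Real.exp (u * (p * Real.log x) + v * (p * Real.log y)) := by ring_nf
    _ ≤ u * Real.exp (p * Real.log x) + v * Real.exp (p * Real.log y) := key
    _ = u * x ^ p + v * y ^ p := by rw [rpow_def_of_pos hx', rpow_def_of_pos hy']; ring_nf

/-- The chord-slope function of `x ↦ x^c` anchored at `1` is strictly decreasing. -/
lemma phi_strictAnti {c : ℝ} (hc0 : 0 < c) (hc1 : c < 1) :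
    StrictAntiOn (fun s : ℝ => (1 - s ^ c) / (1 - s)) (Ioo (0:ℝ) 1) := by
  intro s₁ h₁ s₂ h₂ hlt
  obtain ⟨hs₁0, hs₁1⟩ := h₁
  obtain ⟨hs₂0, hs₂1⟩ := h₂
  set l : ℝ := (1 - s₂) / (1 - s₁) with hl
  have h1s₁ : (0:ℝ) < 1 - s₁ := by linarith
  have h1s₂ : (0:ℝ) < 1 - s₂ := by linarith
  have hl0 : 0 < l := div_pos h1s₂ h1s₁
  have hl1 : l < 1 := (div_lt_one h1s₁).2 (by linarith)
  have hsum : l + (1 - l) = 1 := by ring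
  have hcomb : l * s₁ + (1 - l) * 1 = s₂ := by rw [hl]; field_simp; ring
  have hconc := (strictConcaveOn_rpow hc0 hc1).2 (le_of_lt hs₁0) (mem_Ici.2 zero_le_one)
    (by linarith : s₁ ≠ 1) hl0 (by linarith) hsum
  simp only [smul_eq_mul, one_rpow] at hconc
  rw [hcomb] at hconc
  have key : 1 - s₂ ^ c < l * (1 - s₁ ^ c) := by nlinarith
  calc (1 - s₂ ^ c) / (1 - s₂) < (l * (1 - s₁ ^ c)) / (1 - s₂) :=
        div_lt_div_of_pos_right key h1s₂
    _ = (1 - s₁ ^ c) / (1 - s₁) := by rw [hl]; field_simp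

/-- The chord-slope function of `x ↦ x^p`, `p < 0`, anchored at `1`. -/
lemma util_strictAnti {p : ℝ} (hp : p < 0) :
    StrictAntiOn (fun w : ℝ => (w ^ p - 1) / (1 - w)) (Ioo (0:ℝ) 1) := by
  intro w₁ h₁ w₂ h₂ hlt
  obtain ⟨hw₁0, hw₁1⟩ := h₁
  obtain ⟨hw₂0, hw₂1⟩ := h₂
  set l : ℝ := (1 - w₂) / (1 - w₁) with hl
  have h1w₁ : (0:ℝ) < 1 - w₁ := by linarith
  have h1w₂ : (0:ℝ) < 1 - w₂ := by linarith
  have hl0 : 0 < l := div_pos h1w₂ h1w₁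
  have hsum : l + (1 - l) = 1 := by ring
  have hl1 : l < 1 := (div_lt_one h1w₁).2 (by linarith)
  have hcomb : l * w₁ + (1 - l) * 1 = w₂ := by rw [hl]; field_simp; ring
  have hconv := (myStrictConvexOn_rpow_neg hp).2 (hw₁0) (by norm_num : (1:ℝ) ∈ Ioi (0:ℝ))
    (by linarith : w₁ ≠ 1) hl0 (by linarith) hsum
  simp only [smul_eq_mul, one_rpow] at hconv
  rw [hcomb] at hconv
  have key : w₂ ^ p - 1 < l * (w₁ ^ p - 1) := by nlinarith
  calc (w₂ ^ p - 1) / (1 - w₂) < (l * (w₁ ^ p - 1)) / (1 - w₂) :=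
        div_lt_div_of_pos_right key h1w₂
    _ = (w₁ ^ p - 1) / (1 - w₁) := by rw [hl]; field_simp

/-- The chord-slope of `x^c` at `1` tends to `c` from the left. -/
lemma phi_tendsto {c : ℝ} :
    Tendsto (fun s : ℝ => (1 - s ^ c) / (1 - s)) (nhdsWithin 1 (Iio 1)) (nhds c) := by
  have hd : HasDerivAt (fun x : ℝ => x ^ c) (c * (1:ℝ) ^ (c - 1)) 1 :=
    Real.hasDerivAt_rpow_const (Or.inl one_ne_zero)
  rw [Real.one_rpow, mul_one] at hd
  have hslope := hasDerivAt_iff_tendsto_slope.1 hd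
  have hmono : nhdsWithin (1:ℝ) (Iio 1) ≤ nhdsWithin (1:ℝ) {(1:ℝ)}ᶜ :=
    nhdsWithin_mono _ (fun x hx => ne_of_lt hx)
  have h2 := hslope.mono_left hmono
  refine h2.congr' ?_
  filter_upwards [self_mem_nhdsWithin] with s hs
  have hs1 : s ≠ 1 := ne_of_lt hs
  rw [slope_def_field]
  rw [Real.one_rpow]
  rw [div_eq_div_iff (sub_ne_zero.2 hs1) (sub_ne_zero.2 (Ne.symm hs1))]
  ring

/-! ### The functions `Haux` and `Gaux` -/

noncomputable def Haux (c b t : ℝ) : ℝ := (1+t) ^ (c - 1/b) / ((1+t) ^ c - t ^ c)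

noncomputable def Gaux (c t : ℝ) : ℝ := (1+t) ^ (1-c) * ((1+t) ^ c - t ^ c)

variable {c b t : ℝ}

lemma Dpos (hc0 : 0 < c) (ht : 0 < t) : 0 < (1+t) ^ c - t ^ c :=
  sub_pos.2 (Real.rpow_lt_rpow ht.le (by linarith) hc0)

lemma Gaux_pos (hc0 : 0 < c) (ht : 0 < t) : 0 < Gaux c t :=
  mul_pos (Real.rpow_pos_of_pos (by linarith) _) (Dpos hc0 ht)

lemma Gaux_eq_phi (ht : 0 < t) :
    Gaux c t = (1 - (t/(1+t)) ^ c) / (1 - t/(1+t)) := by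
  have h1t : (0:ℝ) < 1 + t := by linarith
  have hX : (0:ℝ) < (1+t) ^ c := Real.rpow_pos_of_pos h1t c
  have e1 : (1+t:ℝ) ^ (1-c) = (1+t) / (1+t) ^ c := by
    rw [Real.rpow_sub h1t, Real.rpow_one]
  have e2 : (t/(1+t)) ^ c = t ^ c / (1+t) ^ c := Real.div_rpow ht.le h1t.le c
  simp only [Gaux]
  rw [e1, e2]
  field_simp
  ring

lemma Smem (ht : 0 < t) : t/(1+t) ∈ Ioo (0:ℝ) 1 := by
  have h1t : (0:ℝ) < 1 + t := by linarith
  exact ⟨div_pos ht h1t, (div_lt_one h1t).2 (by linarith)⟩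

lemma Haux_eq_G (ht : 0 < t) : Haux c b t = (1+t) ^ (1 - 1/b) / Gaux c t := by
  have h1t : (0:ℝ) < 1 + t := by linarith
  have hB : (1+t:ℝ) ^ (1-c) ≠ 0 := (Real.rpow_pos_of_pos h1t _).ne'
  have e : (1+t:ℝ) ^ (1-1/b) = (1+t) ^ (1-c) * (1+t) ^ (c-1/b) := by
    rw [← Real.rpow_add h1t]; ring_nf
  simp only [Haux, Gaux]
  rw [e, mul_div_mul_left _ _ hB]

lemma Gaux_lt_one (hc0 : 0 < c) (hc1 : c < 1) (ht : 0 < t) : Gaux c t < 1 := by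
  have h1t : (0:ℝ) < 1 + t := by linarith
  have expand : Gaux c t = (1+t) - (1+t) ^ (1-c) * t ^ c := by
    simp only [Gaux]
    rw [mul_sub, ← Real.rpow_add h1t, sub_add_cancel, Real.rpow_one]
  have ht' : t = t ^ (1-c) * t ^ c := by
    rw [← Real.rpow_add ht, sub_add_cancel, Real.rpow_one]
  have hlt : t ^ (1-c) * t ^ c < (1+t) ^ (1-c) * t ^ c :=
    mul_lt_mul_of_pos_right
      (Real.rpow_lt_rpow ht.le (by linarith) (by linarith)) (Real.rpow_pos_of_pos ht c)
  rw [expand]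
  nlinarith [ht'.trans_lt hlt]

lemma Gaux_gt (hc0 : 0 < c) (hc1 : c < 1) (ht : 0 < t) : c < Gaux c t := by
  rw [Gaux_eq_phi ht]
  set s := t/(1+t) with hsdef
  have hs : s ∈ Ioo (0:ℝ) 1 := Smem ht
  set s' := (s+1)/2 with hs'def
  have hs' : s' ∈ Ioo (0:ℝ) 1 := ⟨by simp only [hs'def]; linarith [hs.1, hs.2],
    by simp only [hs'def]; linarith [hs.2]⟩
  have hlt : s < s' := by simp only [hs'def]; linarith [hs.2]
  have h1 : (1 - s' ^ c) / (1 - s') < (1 - s ^ c) / (1 - s) :=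
    phi_strictAnti hc0 hc1 hs hs' hlt
  have h2 : c ≤ (1 - s' ^ c) / (1 - s') := by
    refine le_of_tendsto (phi_tendsto) ?_
    have hmem : Ioo s' (1:ℝ) ∈ nhdsWithin (1:ℝ) (Iio 1) :=
      Ioo_mem_nhdsLT hs'.2
    filter_upwards [hmem] with x hx
    exact le_of_lt (phi_strictAnti hc0 hc1 hs' ⟨lt_trans hs'.1 hx.1, hx.2⟩ hx.1)
  linarith

lemma S_lt_S (hx : 0 < t) {y : ℝ} (hxy : t < y) : t/(1+t) < y/(1+y) := by
  rw [div_lt_div_iff₀ (by linarith) (by linarith)]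
  nlinarith

lemma Haux_one_eq (ht : 0 < t) : Haux c 1 t = (Gaux c t)⁻¹ := by
  rw [Haux_eq_G ht]
  norm_num

/-! ### b = 1 pieces -/

lemma mono_one (hc0 : 0 < c) (hc1 : c < 1) : StrictMonoOn (Haux c 1) (Ioi (0:ℝ)) := by
  intro x hx y hy hxy
  rw [Haux_one_eq hx, Haux_one_eq hy]
  have hGlt : Gaux c y < Gaux c x := by
    rw [Gaux_eq_phi hx, Gaux_eq_phi hy]
    exact phi_strictAnti hc0 hc1 (Smem hx) (Smem hy) (S_lt_S hx hxy)
  exact inv_strictAnti₀ (Gaux_pos hc0 hy) hGlt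

lemma tendsto_zero (hc0 : 0 < c) : Tendsto (Haux c b) (nhdsWithin 0 (Ioi 0)) (nhds 1) := by
  have hnum : ContinuousAt (fun t : ℝ => (1+t) ^ (c - 1/b)) 0 := by
    apply ContinuousAt.rpow_const (by fun_prop)
    left; norm_num
  have hden : ContinuousAt (fun t : ℝ => (1+t) ^ c - t ^ c) 0 := by
    apply ContinuousAt.sub
    · apply ContinuousAt.rpow_const (by fun_prop)
      left; norm_num
    · exact continuousAt_id.rpow_const (Or.inr hc0.le)
  have hcont : ContinuousAt (Haux c b) 0 := by
    apply hnum.div hden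
    simp [Real.zero_rpow hc0.ne']
  have hval : Haux c b 0 = 1 := by
    simp [Haux, Real.zero_rpow hc0.ne']
  have := hcont.tendsto.mono_left (nhdsWithin_le_nhds (s := Ioi (0:ℝ)))
  rwa [hval] at this

lemma contAt (hc0 : 0 < c) (ht : 0 < t) : ContinuousAt (Haux c b) t := by
  have h1t : (0:ℝ) < 1 + t := by linarith
  have hnum : ContinuousAt (fun t : ℝ => (1+t) ^ (c - 1/b)) t := by
    apply ContinuousAt.rpow_const (by fun_prop)
    left; exact h1t.ne'
  have hden : ContinuousAt (fun t : ℝ => (1+t) ^ c - t ^ c) t := by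
    apply ContinuousAt.sub
    · apply ContinuousAt.rpow_const (by fun_prop)
      left; exact h1t.ne'
    · exact continuousAt_id.rpow_const (Or.inl ht.ne')
  exact hnum.div hden (Dpos hc0 ht).ne'

lemma tendsto_S : Tendsto (fun t : ℝ => t/(1+t)) atTop (nhdsWithin 1 (Iio 1)) := by
  rw [tendsto_nhdsWithin_iff]
  constructor
  · have h1 : Tendsto (fun t : ℝ => 1 - (1+t)⁻¹) atTop (nhds (1 - 0)) :=
      tendsto_const_nhds.sub
        ((tendsto_atTop_add_const_left _ 1 tendsto_id).inv_tendsto_atTop)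
    rw [sub_zero] at h1
    refine h1.congr' ?_
    filter_upwards [eventually_gt_atTop (0:ℝ)] with t ht
    have h1t : (0:ℝ) < 1 + t := by linarith
    field_simp
    ring
  · filter_upwards [eventually_gt_atTop (0:ℝ)] with t ht
    exact (Smem ht).2

lemma tendsto_G (hc0 : 0 < c) : Tendsto (Gaux c) atTop (nhds c) := by
  have := (phi_tendsto (c := c)).comp tendsto_S
  refine this.congr' ?_
  filter_upwards [eventually_gt_atTop (0:ℝ)] with t ht
  exact (Gaux_eq_phi ht).symm

lemma tendsto_one_inf (hc0 : 0 < c) : Tendsto (Haux c 1) atTop (nhds c⁻¹) := by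
  refine ((tendsto_G hc0).inv₀ hc0.ne').congr' ?_
  filter_upwards [eventually_gt_atTop (0:ℝ)] with t ht
  exact (Haux_one_eq ht).symm

lemma lt_bound_one (hc0 : 0 < c) (hc1 : c < 1) (ht : 0 < t) : Haux c 1 t < c⁻¹ := by
  rw [Haux_one_eq ht]
  exact inv_strictAnti₀ hc0 (Gaux_gt hc0 hc1 ht)

lemma isLUB_one (hc0 : 0 < c) (hc1 : c < 1) :
    IsLUB { r | ∃ t : ℝ, 0 < t ∧ r = Haux c 1 t } c⁻¹ := by
  constructor
  · rintro r ⟨t, ht, rfl⟩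
    exact (lt_bound_one hc0 hc1 ht).le
  · intro M hM
    refine le_of_tendsto (tendsto_one_inf hc0) ?_
    filter_upwards [eventually_gt_atTop (0:ℝ)] with t ht
    exact hM ⟨t, ht, rfl⟩

/-! ### b > 1 piece -/

lemma unbdd (hc0 : 0 < c) (hc1 : c < 1) (hb1 : 1 < b) :
    ¬ BddAbove { r | ∃ t : ℝ, 0 < t ∧ r = Haux c b t } := by
  rintro ⟨M, hM⟩
  have hb0 : (0:ℝ) < b := lt_trans one_pos hb1
  set α : ℝ := 1 - 1/b with hα
  have hα0 : 0 < α := by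
    have : 1/b < 1 := (div_lt_one hb0).2 hb1
    simp only [hα]; linarith
  set K : ℝ := max 1 (M+1) with hK
  have hK1 : (1:ℝ) ≤ K := le_max_left _ _
  set t : ℝ := K ^ (1/α) with htdef
  have htpos : 0 < t := Real.rpow_pos_of_pos (by linarith) _
  have h1t : (0:ℝ) < 1 + t := by linarith
  have hle : Haux c b t ≤ M := hM ⟨t, htpos, rfl⟩
  have h2 : t ^ α = K := by
    rw [htdef, ← Real.rpow_mul (by linarith : (0:ℝ) ≤ K), one_div_mul_cancel hα0.ne',
      Real.rpow_one]
  have h3 : t ^ α < (1+t) ^ α := Real.rpow_lt_rpow htpos.le (by linarith) hα0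
  have h4 : (1+t) ^ α < Haux c b t := by
    rw [Haux_eq_G htpos, ← hα]
    have hG0 := Gaux_pos hc0 htpos
    have hG1 := Gaux_lt_one hc0 hc1 htpos
    rw [lt_div_iff₀ hG0]
    have hA : (0:ℝ) < (1+t) ^ α := Real.rpow_pos_of_pos h1t _
    nlinarith
  have : M + 1 ≤ K := le_max_right _ _
  rw [h2] at h3
  linarith

/-! ### b < 1 : derivative and critical point pieces -/

lemma hasDeriv_Haux (hc0 : 0 < c) (ht : 0 < t) :
    HasDerivAt (Haux c b)
      ((1 * ((c - 1/b) * (1+t) ^ (c - 1/b - 1)) * ((1+t) ^ c - t ^ c) -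
        (1+t) ^ (c - 1/b) * (1 * (c * (1+t) ^ (c-1)) - c * t ^ (c-1))) /
        ((1+t) ^ c - t ^ c) ^ 2) t := by
  have h1t : (0:ℝ) < 1 + t := by linarith
  have hA : HasDerivAt (fun t : ℝ => (1+t) ^ (c - 1/b))
      (1 * (c - 1/b) * (1+t) ^ (c - 1/b - 1)) t :=
    ((hasDerivAt_id t).const_add 1).rpow_const (Or.inl h1t.ne')
  have hB1 : HasDerivAt (fun t : ℝ => (1+t) ^ c) (1 * c * (1+t) ^ (c - 1)) t :=
    ((hasDerivAt_id t).const_add 1).rpow_const (Or.inl h1t.ne')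
  have hB2 : HasDerivAt (fun t : ℝ => t ^ c) (c * t ^ (c - 1)) t :=
    Real.hasDerivAt_rpow_const (Or.inl ht.ne')
  have hD := hB1.sub hB2
  have := hA.div hD (Dpos hc0 ht).ne'
  refine this.congr_deriv ?_
  simp only [Pi.sub_apply]
  ring

lemma max_implies (hc0 : 0 < c) (ht : 0 < t)
    (hmax : ∀ s : ℝ, 0 < s → Haux c b s ≤ Haux c b t) :
    ((1+t) * t ^ (c-1) - (1+t) ^ c) / ((1+t) ^ c - t ^ c) = (1/b - c)/c := by
  have h1t : (0:ℝ) < 1 + t := by linarith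
  have hD := Dpos hc0 ht
  have hloc : IsLocalMax (Haux c b) t :=
    IsMaxOn.isLocalMax (fun x hx => hmax x hx) (Ioi_mem_nhds ht)
  have h0 : deriv (Haux c b) t = 0 := hloc.deriv_eq_zero
  rw [(hasDeriv_Haux hc0 ht).deriv] at h0
  have hnum : 1 * ((c - 1/b) * (1+t) ^ (c - 1/b - 1)) * ((1+t) ^ c - t ^ c) -
      (1+t) ^ (c - 1/b) * (1 * (c * (1+t) ^ (c-1)) - c * t ^ (c-1)) = 0 := by
    rcases div_eq_zero_iff.1 h0 with h | h
    · exact h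
    · exact absurd h (pow_ne_zero 2 hD.ne')
  have hee : (1+t:ℝ) ^ (c - 1/b) = (1+t) ^ (c - 1/b - 1) * (1+t) := by
    rw [← Real.rpow_add_one h1t.ne' (c - 1/b - 1)]
    ring_nf
  have hZ : (0:ℝ) < (1+t) ^ (c - 1/b - 1) := Real.rpow_pos_of_pos h1t _
  rw [hee] at hnum
  have heq : (c - 1/b) * ((1+t) ^ c - t ^ c) =
      (1+t) * (c * (1+t) ^ (c-1) - c * t ^ (c-1)) := by
    have h5 : (1+t) ^ (c - 1/b - 1) * ((c - 1/b) * ((1+t) ^ c - t ^ c)) =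
        (1+t) ^ (c - 1/b - 1) * ((1+t) * (c * (1+t) ^ (c-1) - c * t ^ (c-1))) := by
      linear_combination hnum
    exact mul_left_cancel₀ hZ.ne' h5
  have hc' : (1+t:ℝ) ^ c = (1+t) ^ (c-1) * (1+t) := by
    rw [← Real.rpow_add_one h1t.ne' (c-1)]; ring_nf
  have htc : t ^ c = t ^ (c-1) * t := by
    rw [← Real.rpow_add_one ht.ne' (c-1)]; ring_nf
  rw [div_eq_div_iff hD.ne' hc0.ne']
  rw [hc', htc] at heq ⊢
  linear_combination heq

lemma V_eq (hc0 : 0 < c) (hc1 : c < 1) (ht : 0 < t) :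
    ((1+t) * t ^ (c-1) - (1+t) ^ c) / ((1+t) ^ c - t ^ c) =
      (((t/(1+t)) ^ c) ^ ((c-1)/c) - 1) / (1 - (t/(1+t)) ^ c) := by
  have h1t : (0:ℝ) < 1 + t := by linarith
  have hX : (0:ℝ) < (1+t) ^ c := Real.rpow_pos_of_pos h1t c
  have hD := Dpos hc0 ht
  have hwp : ((t/(1+t)) ^ c) ^ ((c-1)/c) = (t/(1+t)) ^ (c-1) := by
    rw [← Real.rpow_mul (div_nonneg ht.le h1t.le)]
    congr 1
    field_simp
  have hw2 : (t/(1+t)) ^ (c-1) = t ^ (c-1) / (1+t) ^ (c-1) :=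
    Real.div_rpow ht.le h1t.le _
  have h3 : (1+t:ℝ) ^ (c-1) = (1+t) ^ c / (1+t) := by
    rw [Real.rpow_sub h1t, Real.rpow_one]
  have hw : (t/(1+t)) ^ c = t ^ c / (1+t) ^ c := Real.div_rpow ht.le h1t.le c
  have htc : t ^ c = t ^ (c-1) * t := by
    rw [← Real.rpow_add_one ht.ne' (c-1)]; ring_nf
  have hDne : (1+t) ^ c - t ^ (c-1) * t ≠ 0 := by rw [← htc]; exact hD.ne'
  have h1mw : 1 - t ^ (c-1) * t / (1+t) ^ c ≠ 0 := by
    have heq2 : 1 - t ^ (c-1) * t / (1+t) ^ c = ((1+t) ^ c - t ^ (c-1) * t) / (1+t) ^ c := by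
      field_simp
    rw [heq2]
    exact div_ne_zero hDne hX.ne'
  rw [hwp, hw2, h3, hw, htc]
  field_simp

lemma V_strictAnti (hc0 : 0 < c) (hc1 : c < 1) :
    StrictAntiOn (fun t : ℝ => ((1+t) * t ^ (c-1) - (1+t) ^ c) / ((1+t) ^ c - t ^ c))
      (Ioi (0:ℝ)) := by
  have hp : (c-1)/c < 0 := div_neg_of_neg_of_pos (by linarith) hc0
  intro x hx y hy hxy
  have hx' : (0:ℝ) < x := hx
  have hy' : (0:ℝ) < y := hy
  simp only
  rw [V_eq hc0 hc1 hx', V_eq hc0 hc1 hy']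
  have hWmem : ∀ {z : ℝ}, 0 < z → (z/(1+z)) ^ c ∈ Ioo (0:ℝ) 1 := by
    intro z hz
    obtain ⟨h1, h2⟩ := Smem hz
    exact ⟨Real.rpow_pos_of_pos h1 c, Real.rpow_lt_one h1.le h2 hc0⟩
  have hWlt : (x/(1+x)) ^ c < (y/(1+y)) ^ c :=
    Real.rpow_lt_rpow (div_nonneg hx'.le (by linarith)) (S_lt_S hx' hxy) hc0
  exact util_strictAnti hp (hWmem hx') (hWmem hy') hWlt

lemma exists_gt_one (hc0 : 0 < c) (hc1 : c < 1) (hb0 : 0 < b) (hb1 : b < 1) :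
    ∃ t₀ : ℝ, 0 < t₀ ∧ 1 < Haux c b t₀ := by
  have h1c : (0:ℝ) < 1 - c := by linarith
  set m : ℝ := min 1 b with hm
  have hm0 : 0 < m := lt_min one_pos hb0
  have hm1 : m ≤ 1 := min_le_left _ _
  set A : ℝ := m ^ (1/(1-c)) with hA
  have hA0 : 0 < A := Real.rpow_pos_of_pos hm0 _
  set t₀ : ℝ := A / 2 with ht₀
  have ht₀0 : 0 < t₀ := by positivity
  have h1t : (0:ℝ) < 1 + t₀ := by linarith
  refine ⟨t₀, ht₀0, ?_⟩
  -- key1 : t₀ ^ (1-c) < b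
  have hAm : A ^ (1-c) = m := by
    rw [hA, ← Real.rpow_mul hm0.le, one_div_mul_cancel h1c.ne', Real.rpow_one]
  have key1 : t₀ ^ (1-c) < b := by
    have h01 : t₀ < A := by rw [ht₀]; linarith
    have := Real.rpow_lt_rpow ht₀0.le h01 h1c
    rw [hAm] at this
    exact lt_of_lt_of_le this (min_le_right _ _)
  -- key2 : Bernoulli
  have hq1 : 1 ≤ 1/b := (le_div_iff₀ hb0).2 (by linarith)
  have hbern : 1 + (1/b) * (-(t₀/(1+t₀))) ≤ (1 + (-(t₀/(1+t₀)))) ^ (1/b) := by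
    apply one_add_mul_self_le_rpow_one_add _ hq1
    have : t₀/(1+t₀) < 1 := (Smem ht₀0).2
    linarith
  have hsimp : (1:ℝ) + (-(t₀/(1+t₀))) = (1+t₀)⁻¹ := by field_simp; ring
  have hinv : ((1+t₀:ℝ)⁻¹) ^ (1/b) = (1+t₀) ^ (-(1/b)) := by
    rw [Real.inv_rpow h1t.le, ← Real.rpow_neg h1t.le]
  rw [hsimp, hinv] at hbern
  -- so : 1 - (1/b) * t₀/(1+t₀) ≤ (1+t₀) ^ (-(1/b))
  have key2 : (1+t₀) ^ c - (1+t₀) ^ (c - 1/b) ≤ t₀/b := by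
    have hXpos : (0:ℝ) < (1+t₀) ^ c := Real.rpow_pos_of_pos h1t c
    have hsplit : (1+t₀:ℝ) ^ (c - 1/b) = (1+t₀) ^ c * (1+t₀) ^ (-(1/b)) := by
      rw [← Real.rpow_add h1t]; ring_nf
    have hc1' : (1+t₀:ℝ) ^ (c-1) ≤ 1 :=
      Real.rpow_le_one_of_one_le_of_nonpos (by linarith) (by linarith)
    have hXsplit : (1+t₀:ℝ) ^ (c-1) = (1+t₀) ^ c * (1+t₀)⁻¹ := by
      rw [Real.rpow_sub h1t, Real.rpow_one, div_eq_mul_inv]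
    have step1 : (1+t₀) ^ c - (1+t₀) ^ (c - 1/b) ≤ (1+t₀) ^ c * ((1/b) * (t₀/(1+t₀))) := by
      rw [hsplit]
      nlinarith [hbern, hXpos]
    have step2 : (1+t₀:ℝ) ^ c * ((1/b) * (t₀/(1+t₀))) = (1/b) * t₀ * ((1+t₀) ^ c * (1+t₀)⁻¹) := by
      field_simp
    rw [step2, ← hXsplit] at step1
    calc (1+t₀) ^ c - (1+t₀) ^ (c - 1/b) ≤ (1/b) * t₀ * (1+t₀) ^ (c-1) := step1
      _ ≤ (1/b) * t₀ * 1 := by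
          apply mul_le_mul_of_nonneg_left hc1' (by positivity)
      _ = t₀/b := by ring
  -- key3 : t₀/b < t₀ ^ c
  have key3 : t₀/b < t₀ ^ c := by
    have htsplit : t₀ = t₀ ^ (1-c) * t₀ ^ c := by
      rw [← Real.rpow_add ht₀0, sub_add_cancel, Real.rpow_one]
    rw [div_lt_iff₀ hb0]
    calc t₀ = t₀ ^ (1-c) * t₀ ^ c := htsplit
      _ < b * t₀ ^ c := by
          apply mul_lt_mul_of_pos_right key1 (Real.rpow_pos_of_pos ht₀0 c)
      _ = t₀ ^ c * b := by ring
  -- conclude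
  have hfinal : (1+t₀) ^ c - t₀ ^ c < (1+t₀) ^ (c - 1/b) := by linarith
  rw [Haux]
  exact (one_lt_div (Dpos hc0 ht₀0)).2 hfinal

lemma upper_bound (hc0 : 0 < c) (hc1 : c < 1) (ht : 0 < t) :
    Haux c b t ≤ (1+t) ^ (1 - 1/b) / c := by
  rw [Haux_eq_G ht]
  have h1t : (0:ℝ) < 1 + t := by linarith
  exact div_le_div_of_nonneg_left (Real.rpow_pos_of_pos h1t _).le hc0
    (Gaux_gt hc0 hc1 ht).le

/-- behavior of `sup_{t>0} h(t)` for `a > 1*` according to `b`. -/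
theorem sup_h_trichotomy (N : ℕ) (hN : 2 ≤ N) (a b : ℝ)
    (ha : (N : ℝ) / ((N : ℝ) - 1) < a) (hb : 0 < b) :
    (1 < b → ¬ BddAbove { r | ∃ t : ℝ, 0 < t ∧ r = hFun ((N:ℝ)/((N:ℝ)-1)) a b t }) ∧
    (b = 1 →
      StrictMonoOn (hFun ((N:ℝ)/((N:ℝ)-1)) a b) (Set.Ioi 0) ∧
      Tendsto (hFun ((N:ℝ)/((N:ℝ)-1)) a b) (nhdsWithin 0 (Set.Ioi 0)) (nhds 1) ∧
      Tendsto (hFun ((N:ℝ)/((N:ℝ)-1)) a b) atTop (nhds (a / ((N:ℝ)/((N:ℝ)-1)))) ∧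
      sSup { r | ∃ t : ℝ, 0 < t ∧ r = hFun ((N:ℝ)/((N:ℝ)-1)) a b t } =
        a / ((N:ℝ)/((N:ℝ)-1)) ∧
      ¬ ∃ t : ℝ, 0 < t ∧ hFun ((N:ℝ)/((N:ℝ)-1)) a b t =
          sSup { r | ∃ t : ℝ, 0 < t ∧ r = hFun ((N:ℝ)/((N:ℝ)-1)) a b t }) ∧
    (b < 1 → ∃ t₁ : ℝ, 0 < t₁ ∧
      (∀ t : ℝ, 0 < t → hFun ((N:ℝ)/((N:ℝ)-1)) a b t ≤ hFun ((N:ℝ)/((N:ℝ)-1)) a b t₁) ∧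
      1 < hFun ((N:ℝ)/((N:ℝ)-1)) a b t₁ ∧
      ∀ t : ℝ, 0 < t →
        (∀ s : ℝ, 0 < s → hFun ((N:ℝ)/((N:ℝ)-1)) a b s ≤ hFun ((N:ℝ)/((N:ℝ)-1)) a b t) →
        t = t₁) := by
  have hN2 : (2:ℝ) ≤ (N:ℝ) := by exact_mod_cast hN
  have hden : (0:ℝ) < (N:ℝ) - 1 := by linarith
  set os : ℝ := (N:ℝ)/((N:ℝ)-1) with hos
  have hos1 : 1 < os := (one_lt_div hden).2 (by linarith)
  set c : ℝ := os/a with hc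
  have ha0 : 0 < a := by linarith
  have hc0 : 0 < c := div_pos (by linarith) ha0
  have hc1 : c < 1 := (div_lt_one ha0).2 ha
  have hEq : hFun os a b = Haux c b := rfl
  have hval : a / os = c⁻¹ := by rw [hc, inv_div]
  refine ⟨?_, ?_, ?_⟩
  · -- b > 1
    intro hb1
    rw [hEq]
    exact unbdd hc0 hc1 hb1
  · -- b = 1
    intro hb1
    subst hb1
    have hEq1 : hFun os a 1 = Haux c 1 := rfl
    have hsup : sSup { r | ∃ t : ℝ, 0 < t ∧ r = Haux c 1 t } = c⁻¹ :=
      (isLUB_one hc0 hc1).csSup_eq ⟨Haux c 1 1, 1, one_pos, rfl⟩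
    refine ⟨?_, ?_, ?_, ?_, ?_⟩
    · rw [hEq1]; exact mono_one hc0 hc1
    · rw [hEq1]; exact tendsto_zero hc0
    · rw [hEq1, hval]; exact tendsto_one_inf hc0
    · rw [hEq1, hval]; exact hsup
    · rintro ⟨t, ht, heqq⟩
      rw [hEq1, hsup] at heqq
      exact absurd heqq (ne_of_lt (lt_bound_one hc0 hc1 ht))
  · -- b < 1
    intro hb1
    obtain ⟨t₀, ht₀0, hgt1⟩ := exists_gt_one hc0 hc1 hb hb1
    set L := Haux c b t₀ with hL
    have h0 : ∀ᶠ x in nhdsWithin 0 (Ioi 0), Haux c b x < L :=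
      (tendsto_zero hc0).eventually_lt_const hgt1
    obtain ⟨u, hu, hsub⟩ := mem_nhdsGT_iff_exists_Ioo_subset.1 h0
    have hu0 : (0:ℝ) < u := hu
    set α : ℝ := 1 - 1/b with hα
    have h1b : 1 < 1/b := by
      rw [lt_div_iff₀ hb]; linarith
    have hα0 : α < 0 := by rw [hα]; linarith
    have hL0 : 0 < L := lt_trans one_pos hgt1
    have hcL : 0 < c * L := mul_pos hc0 hL0
    set T : ℝ := max t₀ ((c*L) ^ (1/α)) with hT
    have hTt₀ : t₀ ≤ T := le_max_left _ _
    have hdecay : ∀ s : ℝ, T < s → Haux c b s < L := by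
      intro s hs
      have hs0 : 0 < s := lt_of_le_of_lt (le_trans ht₀0.le hTt₀) hs
      have h1s : (c*L) ^ (1/α) < 1 + s :=
        lt_of_le_of_lt (le_max_right t₀ _) (by linarith)
      have h2 : (1+s) ^ α < ((c*L) ^ (1/α)) ^ α :=
        Real.rpow_lt_rpow_of_neg (Real.rpow_pos_of_pos hcL _) h1s hα0
      have h3 : ((c*L) ^ (1/α)) ^ α = c * L := by
        rw [← Real.rpow_mul hcL.le, one_div_mul_cancel hα0.ne, Real.rpow_one]
      rw [h3] at h2
      calc Haux c b s ≤ (1+s) ^ α / c := upper_bound hc0 hc1 hs0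
        _ < (c*L)/c := div_lt_div_of_pos_right h2 hc0
        _ = L := by field_simp
    set ℓ : ℝ := min (u/2) t₀ with hℓ
    have hℓ0 : 0 < ℓ := lt_min (by linarith) ht₀0
    have hℓt₀ : ℓ ≤ t₀ := min_le_right _ _
    have hcont : ContinuousOn (Haux c b) (Icc ℓ T) := fun x hx =>
      (contAt hc0 (lt_of_lt_of_le hℓ0 hx.1)).continuousWithinAt
    have hne : t₀ ∈ Icc ℓ T := ⟨hℓt₀, hTt₀⟩
    obtain ⟨t₁, ht₁K, hmaxK⟩ := isCompact_Icc.exists_isMaxOn ⟨t₀, hne⟩ hcont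
    have ht₁0 : 0 < t₁ := lt_of_lt_of_le hℓ0 ht₁K.1
    have hLt₁ : L ≤ Haux c b t₁ := hmaxK hne
    have hglobal : ∀ s : ℝ, 0 < s → Haux c b s ≤ Haux c b t₁ := by
      intro s hs0
      rcases lt_or_ge s ℓ with h | h
      · have hsu : s ∈ Ioo (0:ℝ) u :=
          ⟨hs0, lt_of_lt_of_le (lt_of_lt_of_le h (min_le_left _ _)) (by linarith)⟩
        exact le_trans (le_of_lt (hsub hsu)) hLt₁
      rcases le_or_gt s T with h2 | h2
      · exact hmaxK ⟨h, h2⟩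
      · exact le_trans (hdecay s h2).le hLt₁
    refine ⟨t₁, ht₁0, hglobal, lt_of_lt_of_le hgt1 hLt₁, ?_⟩
    intro t ht hmaxt
    have h1 := max_implies hc0 ht (fun s hs => hmaxt s hs)
    have h2 := max_implies hc0 ht₁0 hglobal
    exact (V_strictAnti hc0 hc1).injOn (Set.mem_Ioi.2 ht) (Set.mem_Ioi.2 ht₁0)
      (h1.trans h2.symm)
end

section
/- Let N ≥ 2, 1* := N/(N-1), a = 1*, 0 < b < 1, and g(t) := (1+t)(1 - (1+t)^{-1/b})/t for t > 0. Then g is strictly decreasing on (0,∞), with lim_{t→0⁺} g(t) = 1/b and lim_{t→∞} g(t) = 1; hence inf_{t>0} g(t) = 1 and it is not attained. Moreover h(t) := (1+t)^{1-1/b} satisfies sup_{t>0} h(t) = 1, also not attained. -/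
open Real Filter Topology Set

lemma myHasDerivAt (p t : ℝ) (ht : 0 < t) :
    HasDerivAt (fun t : ℝ => (1+t) * (1 - (1+t) ^ (-p)) / t)
      (((1+p*t) * (1+t) ^ (-p) - 1) / t ^ 2) t := by
  have h1 : (0:ℝ) < 1 + t := by linarith
  have hinner : HasDerivAt (fun t : ℝ => (1+t)) 1 t := by
    simpa using (hasDerivAt_id t).const_add 1
  have hpow : HasDerivAt (fun t : ℝ => (1+t) ^ (-p)) (1 * (-p) * (1+t) ^ (-p-1)) t :=
    hinner.rpow_const (Or.inl h1.ne')
  have hd := ((hinner.mul ((hasDerivAt_const t 1).sub hpow))).div (hasDerivAt_id t) ht.ne'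
  simp only [id_eq] at hd
  refine hd.congr_deriv ?_
  simp only [Pi.mul_apply, Pi.sub_apply]
  symm
  have hAB : (1+t) ^ (-p) = (1+t) ^ (-p-1) * (1+t) := by
    rw [← Real.rpow_add_one h1.ne' (-p-1)]; ring_nf
  rw [hAB]; field_simp; ring

lemma derivNeg (p : ℝ) (hp : 1 < p) (t : ℝ) (ht : 0 < t) :
    ((1+p*t) * (1+t) ^ (-p) - 1) / t ^ 2 < 0 := by
  have h1 : (0:ℝ) < 1 + t := by linarith
  have hB : 1 + p * t < (1+t) ^ p :=
    one_add_mul_self_lt_rpow_one_add (by linarith) ht.ne' hp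
  have hposA : (0:ℝ) < (1+t) ^ (-p) := Real.rpow_pos_of_pos h1 _
  have key : (1+p*t) * (1+t) ^ (-p) < 1 := by
    have := mul_lt_mul_of_pos_right hB hposA
    rwa [← Real.rpow_add h1, add_neg_cancel, Real.rpow_zero] at this
  have ht2 : (0:ℝ) < t ^ 2 := by positivity
  exact div_neg_of_neg_of_pos (by linarith) ht2

lemma gStrictAnti (p : ℝ) (hp : 1 < p) :
    StrictAntiOn (fun t : ℝ => (1+t) * (1 - (1+t) ^ (-p)) / t) (Set.Ioi 0) := by
  apply strictAntiOn_of_deriv_neg (convex_Ioi 0)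
  · apply ContinuousOn.div
    · apply ContinuousOn.mul (by fun_prop)
      apply ContinuousOn.sub continuousOn_const
      exact ContinuousOn.rpow_const (by fun_prop) fun t ht =>
        Or.inl (by have : (0:ℝ) < t := ht; positivity)
    · exact continuousOn_id
    · intro t ht; exact ne_of_gt ht
  · intro t ht
    rw [interior_Ioi] at ht
    rw [(myHasDerivAt p t ht).deriv]
    exact derivNeg p hp t ht

lemma gGtOne (p : ℝ) (hp : 1 < p) (t : ℝ) (ht : 0 < t) :
    1 < (1+t) * (1 - (1+t) ^ (-p)) / t := by
  have h1 : (1:ℝ) < 1 + t := by linarith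
  have h1' : (0:ℝ) < 1 + t := by linarith
  have hlt : (1+t) ^ (1 + -p) < 1 :=
    Real.rpow_lt_one_of_one_lt_of_neg h1 (by linarith)
  have hsplit : (1+t) ^ (1 + -p) = (1+t) * (1+t) ^ (-p) := by
    rw [Real.rpow_add h1', Real.rpow_one]
  rw [lt_div_iff₀ ht, one_mul]
  nlinarith [hsplit ▸ hlt]

lemma gTendstoAtTop (p : ℝ) (hp : 1 < p) :
    Tendsto (fun t : ℝ => (1+t) * (1 - (1+t) ^ (-p)) / t) atTop (nhds 1) := by
  have h1 : Tendsto (fun t : ℝ => (1+t)/t) atTop (𝓝 1) := by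
    have h : Tendsto (fun t : ℝ => t⁻¹ + 1) atTop (𝓝 (0 + 1)) :=
      tendsto_inv_atTop_zero.add tendsto_const_nhds
    rw [zero_add] at h
    apply h.congr'
    filter_upwards [eventually_gt_atTop (0:ℝ)] with t ht
    field_simp
  have h2 : Tendsto (fun t : ℝ => 1 - (1+t) ^ (-p)) atTop (𝓝 (1 - 0)) := by
    apply Tendsto.sub tendsto_const_nhds
    exact (tendsto_rpow_neg_atTop (by linarith : (0:ℝ) < p)).comp
      (tendsto_atTop_add_const_left _ 1 tendsto_id)
  rw [sub_zero] at h2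
  have := h1.mul h2
  rw [mul_one] at this
  apply this.congr
  intro t
  rw [mul_div_right_comm]

lemma gTendstoZero (p : ℝ) (hp : 1 < p) :
    Tendsto (fun t : ℝ => (1+t) * (1 - (1+t) ^ (-p)) / t)
      (nhdsWithin 0 (Set.Ioi 0)) (nhds p) := by
  have hf : HasDerivAt (fun t : ℝ => 1 - (1+t) ^ (-p)) p 0 := by
    have hinner : HasDerivAt (fun t : ℝ => (1+t)) 1 0 := by
      simpa using (hasDerivAt_id (0:ℝ)).const_add 1
    have hpow : HasDerivAt (fun t : ℝ => (1+t) ^ (-p)) (1 * (-p) * (1+(0:ℝ)) ^ (-p-1)) 0 :=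
      hinner.rpow_const (Or.inl (by norm_num))
    have := (hasDerivAt_const (0:ℝ) (1:ℝ)).sub hpow
    exact this.congr_deriv (by simp)
  have hslope := hasDerivAt_iff_tendsto_slope.mp hf
  have hslope' : Tendsto (fun t : ℝ => (1 - (1+t) ^ (-p)) / t)
      (nhdsWithin 0 (Set.Ioi 0)) (𝓝 p) := by
    have hmono : nhdsWithin (0:ℝ) (Set.Ioi 0) ≤ nhdsWithin 0 {(0:ℝ)}ᶜ :=
      nhdsWithin_mono 0 (fun x hx => ne_of_gt hx)
    have := hslope.mono_left hmono
    apply this.congr'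
    filter_upwards [self_mem_nhdsWithin] with t (ht : (0:ℝ) < t)
    simp [slope_def_field, div_eq_div_iff, ht.ne']
  have hmul : Tendsto (fun t : ℝ => (1+t)) (nhdsWithin 0 (Set.Ioi 0)) (𝓝 1) := by
    have : Tendsto (fun t : ℝ => (1+t)) (𝓝 0) (𝓝 (1+0)) :=
      (Continuous.tendsto (by continuity) 0).congr (fun x => rfl) |>.mono_left le_rfl
    rw [add_zero] at this
    exact this.mono_left nhdsWithin_le_nhds
  have := hmul.mul hslope'
  rw [one_mul] at this
  apply this.congr
  intro t
  rw [mul_div_assoc]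

/-- for `a = 1*`, `0 < b < 1`, `g` is strictly decreasing with
limits `1/b` at `0⁺` and `1` at `∞`, so `inf g = 1` is not attained; moreover
`h(t) = (1+t)^{1-1/b}` has supremum `1`, also not attained. -/
theorem g_strictAnti_a_eq_onestar (N : ℕ) (hN : 2 ≤ N) (b : ℝ) (hb0 : 0 < b)
    (hb : b < 1) :
    StrictAntiOn (fun t : ℝ => (1+t) * (1 - (1+t) ^ (-(1/b))) / t) (Set.Ioi 0) ∧
    Tendsto (fun t : ℝ => (1+t) * (1 - (1+t) ^ (-(1/b))) / t)
      (nhdsWithin 0 (Set.Ioi 0)) (nhds (1/b)) ∧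
    Tendsto (fun t : ℝ => (1+t) * (1 - (1+t) ^ (-(1/b))) / t) atTop (nhds 1) ∧
    sInf { r | ∃ t : ℝ, 0 < t ∧ r = (1+t) * (1 - (1+t) ^ (-(1/b))) / t } = 1 ∧
    (¬ ∃ t : ℝ, 0 < t ∧ (1+t) * (1 - (1+t) ^ (-(1/b))) / t =
        sInf { r | ∃ t : ℝ, 0 < t ∧ r = (1+t) * (1 - (1+t) ^ (-(1/b))) / t }) ∧
    sSup { r | ∃ t : ℝ, 0 < t ∧ r = (1+t) ^ (1 - 1/b) } = 1 ∧
    ¬ ∃ t : ℝ, 0 < t ∧ (1+t) ^ (1 - 1/b) =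
        sSup { r | ∃ t : ℝ, 0 < t ∧ r = (1+t) ^ (1 - 1/b) } := by
  set p := 1/b with hpdef
  have hp : 1 < p := by
    rw [hpdef]
    rw [lt_div_iff₀ hb0]; linarith
  set S := { r | ∃ t : ℝ, 0 < t ∧ r = (1+t) * (1 - (1+t) ^ (-p)) / t } with hS
  set T := { r | ∃ t : ℝ, 0 < t ∧ r = (1+t) ^ (1 - p) } with hT
  have hSne : S.Nonempty := ⟨(1+1) * (1 - (1+1:ℝ) ^ (-p)) / 1, 1, one_pos, rfl⟩
  have hSbd : BddBelow S := ⟨1, fun r ⟨t, ht, hr⟩ => hr ▸ (gGtOne p hp t ht).le⟩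
  have hInf : sInf S = 1 := by
    apply le_antisymm
    · apply ge_of_tendsto (gTendstoAtTop p hp)
      filter_upwards [eventually_gt_atTop (0:ℝ)] with t ht
      exact csInf_le hSbd ⟨t, ht, rfl⟩
    · exact le_csInf hSne fun r ⟨t, ht, hr⟩ => hr ▸ (gGtOne p hp t ht).le
  have hTne : T.Nonempty := ⟨(1+1:ℝ) ^ (1-p), 1, one_pos, rfl⟩
  have hTlt : ∀ r ∈ T, r < 1 := by
    rintro r ⟨t, ht, rfl⟩
    exact Real.rpow_lt_one_of_one_lt_of_neg (by linarith) (by linarith)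
  have hTbd : BddAbove T := ⟨1, fun r hr => (hTlt r hr).le⟩
  have hSup : sSup T = 1 := by
    apply le_antisymm
    · exact csSup_le hTne fun r hr => (hTlt r hr).le
    · have htend : Tendsto (fun t : ℝ => (1+t) ^ (1-p)) (nhdsWithin 0 (Set.Ioi 0)) (𝓝 1) := by
        have hc : ContinuousAt (fun t : ℝ => (1+t) ^ (1-p)) 0 := by
          apply ContinuousAt.rpow_const (by fun_prop)
          left; norm_num
        have := hc.tendsto.mono_left (nhdsWithin_le_nhds (s := Set.Ioi (0:ℝ)))
        simpa using this
      apply le_of_tendsto htend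
      filter_upwards [self_mem_nhdsWithin] with t (ht : (0:ℝ) < t)
      exact le_csSup hTbd ⟨t, ht, rfl⟩
  refine ⟨gStrictAnti p hp, gTendstoZero p hp, gTendstoAtTop p hp, hInf, ?_, hSup, ?_⟩
  · rintro ⟨t, ht, heq⟩
    rw [hInf] at heq
    exact absurd heq (ne_of_gt (gGtOne p hp t ht))
  · rintro ⟨t, ht, heq⟩
    rw [hSup] at heq
    exact absurd heq (ne_of_lt (hTlt _ ⟨t, ht, rfl⟩))
end

section
/- Let N ≥ 2, 1* := N/(N-1), 0 < a < 1*, b > 1, and g(t) := ((1+t)^{1/b} - 1)(1+t)^{1*/a - 1/b} / t^{1*/a} for t > 0. Then g(t) → ∞ as t → 0⁺ and g(t) → 1 as t → ∞; moreover there is a unique t₁ > 0 such that g is strictly decreasing on (0,t₁) and strictly increasing on (t₁,∞), so inf_{t>0} g(t) = g(t₁) ∈ (0,1) is attained. -/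
open Real Filter Topology Set

noncomputable def Gf (c p t : ℝ) : ℝ := ((1+t) ^ p - 1) * (1+t) ^ (c-p) / t ^ c

noncomputable def gTil (c p t : ℝ) : ℝ := p * t + c * (1 - (1+t) ^ p)

variable {c p : ℝ}

lemma hasDerivAt_base (q t : ℝ) (ht : -1 < t) :
    HasDerivAt (fun t : ℝ => (1+t) ^ q) (q * (1+t) ^ (q-1)) t := by
  have h1 : HasDerivAt (fun t : ℝ => 1 + t) 1 t := (hasDerivAt_id t).const_add 1
  have h2 := (Real.hasDerivAt_rpow_const (x := 1+t) (p := q) (Or.inl (by linarith))).comp t h1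
  simpa [Function.comp_def] using h2

lemma gTil_hasDerivAt (t : ℝ) (ht : -1 < t) :
    HasDerivAt (gTil c p) (p - c * (p * (1+t) ^ (p-1))) t := by
  have h1 : HasDerivAt (fun t : ℝ => p * t) p t := by
    simpa using (hasDerivAt_id t).const_mul p
  have h2 : HasDerivAt (fun t : ℝ => c * (1 - (1+t) ^ p)) (c * (-(p * (1+t) ^ (p-1)))) t :=
    (((hasDerivAt_base p t ht).const_sub 1)).const_mul c
  have := h1.add h2
  exact this.congr_deriv (by ring)

lemma Gf_hasDerivAt (hc : 1 < c) (t : ℝ) (ht : 0 < t) :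
    HasDerivAt (Gf c p) (gTil c p t * (1+t) ^ (c-p-1) / t ^ (c+1)) t := by
  have h1t : (0:ℝ) < 1 + t := by linarith
  have h1 := hasDerivAt_base p t (by linarith)
  have h2 := hasDerivAt_base (c-p) t (by linarith)
  have h3 : HasDerivAt (fun t : ℝ => t ^ c) (c * t ^ (c-1)) t := by
    simpa using Real.hasDerivAt_rpow_const (x := t) (p := c) (Or.inl ht.ne')
  have htc : t ^ c ≠ 0 := (Real.rpow_pos_of_pos ht c).ne'
  have h := ((h1.sub_const 1).mul h2).div h3 htc
  refine h.congr_deriv ?_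
  have e1 : (1+t) ^ (p-1) = (1+t) ^ p / (1+t) := Real.rpow_sub_one h1t.ne' p
  have e2 : (1+t) ^ (c-p) = (1+t) ^ c / (1+t) ^ p := Real.rpow_sub h1t c p
  have e3 : (1+t) ^ (c-p-1) = (1+t) ^ c / (1+t) ^ p / (1+t) := by
    rw [Real.rpow_sub_one h1t.ne', e2]
  have e4 : t ^ (c-1) = t ^ c / t := Real.rpow_sub_one ht.ne' c
  have e5 : t ^ (c+1) = t ^ c * t := Real.rpow_add_one ht.ne' c
  have hup : (0:ℝ) < (1+t) ^ p := Real.rpow_pos_of_pos h1t p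
  have huc : (0:ℝ) < (1+t) ^ c := Real.rpow_pos_of_pos h1t c
  simp only [Pi.mul_apply]
  rw [gTil, e1, e2, e3, e4, e5]
  field_simp
  ring

lemma gTil_tendsto (hc : 1 < c) (hp0 : 0 < p) (hp1 : p < 1) :
    Tendsto (gTil c p) atTop atTop := by
  have h1 : Tendsto (fun t : ℝ => 1 + t) atTop atTop :=
    tendsto_atTop_add_const_left _ 1 tendsto_id
  have f1 : Tendsto (fun t : ℝ => (1+t) ^ p) atTop atTop :=
    (tendsto_rpow_atTop hp0).comp h1
  have f2 : Tendsto (fun t : ℝ => p * (1+t) ^ (1-p) - c) atTop atTop := by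
    have := tendsto_atTop_add_const_right atTop (-c)
      (((tendsto_rpow_atTop (y := 1-p) (by linarith)).comp h1).const_mul_atTop hp0)
    refine this.congr fun x => ?_
    simp [Function.comp, sub_eq_add_neg]
  have key : Tendsto (fun t : ℝ => (1+t) ^ p * (p * (1+t) ^ (1-p) - c) + (c - p)) atTop atTop :=
    tendsto_atTop_add_const_right _ _ (f1.atTop_mul_atTop₀ f2)
  refine key.congr' ?_
  filter_upwards [eventually_gt_atTop (0:ℝ)] with t ht
  have h1t : (0:ℝ) < 1 + t := by linarith
  have : (1+t) ^ p * (1+t) ^ (1-p) = 1 + t := by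
    rw [← Real.rpow_add h1t]; norm_num
  simp only [gTil]
  nlinarith [this]

lemma gTil_deriv_neg (hc : 1 < c) (hp0 : 0 < p) (hp1 : p < 1) {t : ℝ} (ht : 0 ≤ t)
    (ht0 : t < c ^ (1-p)⁻¹ - 1) : p - c * (p * (1+t) ^ (p-1)) < 0 := by
  have h1t : (0:ℝ) < 1 + t := by linarith
  have h1 : (1+t) ^ (1-p) < c := by
    have : 1 + t < c ^ (1-p)⁻¹ := by linarith
    calc (1+t) ^ (1-p) < (c ^ (1-p)⁻¹) ^ (1-p) :=
          Real.rpow_lt_rpow h1t.le this (by linarith)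
      _ = c := by
          rw [← Real.rpow_mul (by positivity), inv_mul_cancel₀ (by linarith : (1:ℝ)-p ≠ 0),
            Real.rpow_one]
  have h2 : 1 < c * (1+t) ^ (p-1) := by
    have e : (1+t) ^ (p-1) = ((1+t) ^ (1-p))⁻¹ := by
      rw [← Real.rpow_neg_one ((1+t) ^ (1-p)), ← Real.rpow_mul h1t.le]; ring_nf
    rw [e, ← div_eq_mul_inv]
    exact (one_lt_div (Real.rpow_pos_of_pos h1t _)).mpr h1
  nlinarith [Real.rpow_pos_of_pos h1t (p-1)]

lemma gTil_deriv_pos (hc : 1 < c) (hp0 : 0 < p) (hp1 : p < 1) {t : ℝ}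
    (ht0 : c ^ (1-p)⁻¹ - 1 < t) : 0 < p - c * (p * (1+t) ^ (p-1)) := by
  have hcpos : (0:ℝ) < c := by linarith
  have h1t : (0:ℝ) < 1 + t := by
    have : (0:ℝ) < c ^ (1-p)⁻¹ := Real.rpow_pos_of_pos hcpos _
    linarith
  have h1 : c < (1+t) ^ (1-p) := by
    have hlt : c ^ (1-p)⁻¹ < 1 + t := by linarith
    calc c = (c ^ (1-p)⁻¹) ^ (1-p) := by
          rw [← Real.rpow_mul hcpos.le, inv_mul_cancel₀ (by linarith : (1:ℝ)-p ≠ 0),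
            Real.rpow_one]
      _ < (1+t) ^ (1-p) := Real.rpow_lt_rpow (by positivity) hlt (by linarith)
  have h2 : c * (1+t) ^ (p-1) < 1 := by
    have e : (1+t) ^ (p-1) = ((1+t) ^ (1-p))⁻¹ := by
      rw [← Real.rpow_neg_one ((1+t) ^ (1-p)), ← Real.rpow_mul h1t.le]; ring_nf
    rw [e, ← div_eq_mul_inv]
    exact (div_lt_one (Real.rpow_pos_of_pos h1t _)).mpr h1
  nlinarith

lemma gTil_contAt (t : ℝ) (ht : -1 < t) : ContinuousAt (gTil c p) t :=
  (gTil_hasDerivAt t ht).continuousAt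

/-- the full sign structure of `gTil`. -/
lemma gTil_sign (hc : 1 < c) (hp0 : 0 < p) (hp1 : p < 1) :
    ∃ t₁ : ℝ, 0 < t₁ ∧ gTil c p t₁ = 0 ∧
      (∀ t, 0 < t → t < t₁ → gTil c p t < 0) ∧ (∀ t, t₁ < t → 0 < gTil c p t) := by
  set t₀ : ℝ := c ^ (1-p)⁻¹ - 1 with ht₀def
  have hcpos : (0:ℝ) < c := by linarith
  have ht₀ : 0 < t₀ := by
    have : (1:ℝ) < c ^ (1-p)⁻¹ :=
      (Real.one_lt_rpow_iff_of_pos hcpos).mpr (Or.inl ⟨hc, by rw [inv_pos]; linarith⟩)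
    simpa [ht₀def] using this
  -- gTil is strictly decreasing on [0, t₀]
  have hanti : StrictAntiOn (gTil c p) (Icc 0 t₀) := by
    refine strictAntiOn_of_deriv_neg (convex_Icc 0 t₀)
      (fun t ht => (gTil_contAt t (by have := ht.1; linarith)).continuousWithinAt) ?_
    intro t ht
    rw [interior_Icc] at ht
    rw [(gTil_hasDerivAt t (by have := ht.1; linarith)).deriv]
    exact gTil_deriv_neg hc hp0 hp1 ht.1.le ht.2
  -- gTil is strictly increasing on [t₀, ∞)
  have hmono : StrictMonoOn (gTil c p) (Ici t₀) := by
    refine strictMonoOn_of_deriv_pos (convex_Ici t₀)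
      (fun t ht => (gTil_contAt t (by have : t₀ ≤ t := ht; linarith)).continuousWithinAt) ?_
    intro t ht
    rw [interior_Ici] at ht
    rw [(gTil_hasDerivAt t (by have : t₀ < t := ht; linarith)).deriv]
    exact gTil_deriv_pos hc hp0 hp1 ht
  have hg0 : gTil c p 0 = 0 := by simp [gTil]
  have hgt₀ : gTil c p t₀ < 0 := by
    have := hanti (left_mem_Icc.2 ht₀.le) (right_mem_Icc.2 ht₀.le) ht₀
    rwa [hg0] at this
  -- find T with gTil T > 0
  obtain ⟨T, hT1, hT2⟩ := ((gTil_tendsto hc hp0 hp1).eventually_gt_atTop 0).and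
    (eventually_ge_atTop t₀) |>.exists
  have hIVT : (0:ℝ) ∈ gTil c p '' Ioo t₀ T := by
    apply intermediate_value_Ioo hT2
      (fun t ht => (gTil_contAt t (by have := ht.1; linarith)).continuousWithinAt)
    exact ⟨hgt₀, hT1⟩
  obtain ⟨t₁, ht₁mem, ht₁⟩ := hIVT
  refine ⟨t₁, by linarith [ht₁mem.1], ht₁, ?_, ?_⟩
  · intro t ht ht'
    rcases le_or_gt t t₀ with h | h
    · have := hanti (left_mem_Icc.2 ht₀.le) ⟨ht.le, h⟩ ht
      rwa [hg0] at this
    · have := hmono h.le ht₁mem.1.le ht'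
      rwa [ht₁] at this
  · intro t ht
    have := hmono ht₁mem.1.le (ht₁mem.1.le.trans ht.le) ht
    rwa [ht₁] at this

lemma Gf_pos (hc : 1 < c) (hp0 : 0 < p) {t : ℝ} (ht : 0 < t) : 0 < Gf c p t := by
  have h1t : (0:ℝ) < 1 + t := by linarith
  have h1 : (1:ℝ) < (1+t) ^ p :=
    (Real.one_lt_rpow_iff_of_pos h1t).mpr (Or.inl ⟨by linarith, hp0⟩)
  have h2 := Real.rpow_pos_of_pos h1t (c-p)
  have h3 := Real.rpow_pos_of_pos ht c
  exact div_pos (mul_pos (by linarith) h2) h3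

lemma Gf_tendsto_atTop_one (hc : 1 < c) (hp0 : 0 < p) (hp1 : p < 1) :
    Tendsto (Gf c p) atTop (𝓝 1) := by
  have hfrac : Tendsto (fun t : ℝ => (1+t)/t) atTop (𝓝 1) := by
    have : Tendsto (fun t : ℝ => 1 + t⁻¹) atTop (𝓝 (1 + 0)) :=
      (tendsto_const_nhds).add tendsto_inv_atTop_zero
    rw [add_zero] at this
    refine this.congr' ?_
    filter_upwards [eventually_gt_atTop (0:ℝ)] with t ht
    field_simp
    ring
  have hcont : ∀ q : ℝ, Tendsto (fun t : ℝ => ((1+t)/t) ^ q) atTop (𝓝 1) := by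
    intro q
    have h := (Real.continuousAt_rpow_const 1 q (Or.inl one_ne_zero)).tendsto.comp hfrac
    simpa [Function.comp_def] using h
  have hneg : Tendsto (fun t : ℝ => t ^ (-p)) atTop (𝓝 0) := tendsto_rpow_neg_atTop hp0
  have key : Tendsto (fun t : ℝ => ((1+t)/t) ^ c - ((1+t)/t) ^ (c-p) * t ^ (-p))
      atTop (𝓝 (1 - 1 * 0)) := (hcont c).sub ((hcont (c-p)).mul hneg)
  rw [show (1:ℝ) - 1 * 0 = 1 by ring] at key
  refine key.congr' ?_
  filter_upwards [eventually_gt_atTop (0:ℝ)] with t ht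
  have h1t : (0:ℝ) < 1 + t := by linarith
  have htp : (0:ℝ) < t ^ p := Real.rpow_pos_of_pos ht p
  have htc : (0:ℝ) < t ^ c := Real.rpow_pos_of_pos ht c
  have e0 : (1+t) ^ p * (1+t) ^ (c-p) = (1+t) ^ c := by
    rw [← Real.rpow_add h1t]; ring_nf
  have e1 : ((1+t)/t) ^ c = (1+t) ^ c / t ^ c := Real.div_rpow h1t.le ht.le c
  have e2 : ((1+t)/t) ^ (c-p) = (1+t) ^ (c-p) / t ^ (c-p) := Real.div_rpow h1t.le ht.le _
  have e4 : t ^ (c-p) = t ^ c / t ^ p := Real.rpow_sub ht c p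
  have e5 : t ^ (-p) = (t ^ p)⁻¹ := Real.rpow_neg ht.le p
  rw [Gf, e1, e2, e4, e5, ← e0]
  field_simp

lemma Gf_tendsto_zero (hc : 1 < c) (hp0 : 0 < p) :
    Tendsto (Gf c p) (𝓝[>] 0) atTop := by
  -- slope factor → p
  have hd : HasDerivAt (fun t : ℝ => (1+t) ^ p) p 0 := by
    have := hasDerivAt_base p 0 (by norm_num)
    simpa using this
  have hslope : Tendsto (fun t : ℝ => ((1+t) ^ p - 1) / t) (𝓝[>] (0:ℝ)) (𝓝 p) := by
    have h := hasDerivAt_iff_tendsto_slope.mp hd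
    have h' := h.mono_left (nhdsWithin_mono 0 (fun x hx => ne_of_gt hx))
    refine h'.congr' ?_
    filter_upwards [self_mem_nhdsWithin] with t (ht : 0 < t)
    simp [slope_def_field]
  -- (1+t)^(c-p) → 1
  have hB : Tendsto (fun t : ℝ => (1+t) ^ (c-p)) (𝓝[>] (0:ℝ)) (𝓝 1) := by
    have hcb : ContinuousAt (fun t : ℝ => (1+t) ^ (c-p)) 0 := by
      have h1 : ContinuousAt (fun t : ℝ => 1 + t) 0 := by fun_prop
      exact h1.rpow_const (Or.inl (by norm_num))
    have h3 : Tendsto (fun t : ℝ => (1+t) ^ (c-p)) (𝓝[>] (0:ℝ)) (𝓝 ((1+0) ^ (c-p))) :=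
      hcb.tendsto.mono_left nhdsWithin_le_nhds
    simpa using h3
  have hAB : Tendsto (fun t : ℝ => ((1+t) ^ p - 1) / t * (1+t) ^ (c-p)) (𝓝[>] (0:ℝ))
      (𝓝 (p * 1)) := hslope.mul hB
  rw [mul_one] at hAB
  -- t^(1-c) → ∞
  have hC : Tendsto (fun t : ℝ => t ^ (1-c)) (𝓝[>] (0:ℝ)) atTop := by
    have h := (tendsto_rpow_atTop (by linarith : (0:ℝ) < c - 1)).comp tendsto_inv_nhdsGT_zero
    refine h.congr' ?_
    filter_upwards [self_mem_nhdsWithin] with t (ht : 0 < t)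
    simp only [Function.comp]
    rw [← Real.rpow_neg_one t, ← Real.rpow_mul ht.le]
    ring_nf
  have key := Filter.Tendsto.pos_mul_atTop hp0 hAB hC
  refine key.congr' ?_
  filter_upwards [self_mem_nhdsWithin] with t (ht : 0 < t)
  have e4 : t ^ (1-c) = t / t ^ c := by
    rw [Real.rpow_sub ht, Real.rpow_one]
  have htc : (0:ℝ) < t ^ c := Real.rpow_pos_of_pos ht c
  rw [Gf, e4]
  field_simp

lemma Gf_main (hc : 1 < c) (hp0 : 0 < p) (hp1 : p < 1) :
    Tendsto (Gf c p) (𝓝[>] (0:ℝ)) atTop ∧ Tendsto (Gf c p) atTop (𝓝 1) ∧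
    ∃! t₁ : ℝ, 0 < t₁ ∧ StrictAntiOn (Gf c p) (Ioc 0 t₁) ∧ StrictMonoOn (Gf c p) (Ici t₁) ∧
      sInf {r | ∃ t : ℝ, 0 < t ∧ r = Gf c p t} = Gf c p t₁ ∧
      0 < Gf c p t₁ ∧ Gf c p t₁ < 1 := by
  obtain ⟨t₁, ht₁pos, hzero, hneg, hpos⟩ := gTil_sign hc hp0 hp1
  have hanti : StrictAntiOn (Gf c p) (Ioc 0 t₁) := by
    refine strictAntiOn_of_deriv_neg (convex_Ioc 0 t₁)
      (fun t ht => (Gf_hasDerivAt hc t ht.1).continuousAt.continuousWithinAt) ?_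
    intro t ht
    rw [interior_Ioc] at ht
    rw [(Gf_hasDerivAt hc t ht.1).deriv]
    have h1t : (0:ℝ) < 1 + t := by linarith [ht.1]
    exact div_neg_of_neg_of_pos
      (mul_neg_of_neg_of_pos (hneg t ht.1 ht.2) (Real.rpow_pos_of_pos h1t _))
      (Real.rpow_pos_of_pos ht.1 _)
  have hmono : StrictMonoOn (Gf c p) (Ici t₁) := by
    refine strictMonoOn_of_deriv_pos (convex_Ici t₁)
      (fun t ht => (Gf_hasDerivAt hc t (lt_of_lt_of_le ht₁pos ht)).continuousAt.continuousWithinAt) ?_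
    intro t ht
    rw [interior_Ici] at ht
    have htpos : 0 < t := ht₁pos.trans ht
    rw [(Gf_hasDerivAt hc t htpos).deriv]
    have h1t : (0:ℝ) < 1 + t := by linarith
    exact div_pos (mul_pos (hpos t ht) (Real.rpow_pos_of_pos h1t _))
      (Real.rpow_pos_of_pos htpos _)
  have hlb : ∀ r ∈ {r | ∃ t : ℝ, 0 < t ∧ r = Gf c p t}, Gf c p t₁ ≤ r := by
    rintro r ⟨t, ht, rfl⟩
    rcases lt_trichotomy t t₁ with h | h | h
    · exact (hanti ⟨ht, h.le⟩ ⟨ht₁pos, le_rfl⟩ h).le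
    · rw [h]
    · exact (hmono self_mem_Ici h.le h).le
  have hmem : Gf c p t₁ ∈ {r | ∃ t : ℝ, 0 < t ∧ r = Gf c p t} := ⟨t₁, ht₁pos, rfl⟩
  have hInf : sInf {r | ∃ t : ℝ, 0 < t ∧ r = Gf c p t} = Gf c p t₁ :=
    le_antisymm (csInf_le ⟨Gf c p t₁, hlb⟩ hmem) (le_csInf ⟨_, hmem⟩ hlb)
  have hlim := Gf_tendsto_atTop_one hc hp0 hp1
  have hlt1 : Gf c p t₁ < 1 := by
    have h1 : Gf c p t₁ < Gf c p (t₁ + 1) :=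
      hmono self_mem_Ici (by linarith : t₁ ≤ t₁ + 1) (lt_add_one t₁)
    have h2 : Gf c p (t₁ + 1) ≤ 1 := by
      refine ge_of_tendsto hlim ?_
      filter_upwards [eventually_ge_atTop (t₁ + 1)] with t ht
      exact hmono.monotoneOn (by simp : t₁ + 1 ∈ Ici t₁) (by simp only [mem_Ici]; linarith) ht
    linarith
  refine ⟨Gf_tendsto_zero hc hp0, hlim, t₁,
    ⟨ht₁pos, hanti, hmono, hInf, Gf_pos hc hp0 ht₁pos, hlt1⟩, ?_⟩
  rintro t₂ ⟨ht₂pos, hanti₂, hmono₂, -, -, -⟩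
  rcases lt_trichotomy t₂ t₁ with h | h | h
  · exfalso
    have A : Gf c p t₁ < Gf c p t₂ := hanti ⟨ht₂pos, h.le⟩ ⟨ht₁pos, le_rfl⟩ h
    have B : Gf c p t₂ < Gf c p t₁ := hmono₂ self_mem_Ici h.le h
    linarith
  · exact h
  · exfalso
    have A : Gf c p t₂ < Gf c p t₁ := hanti₂ ⟨ht₁pos, h.le⟩ ⟨ht₂pos, le_rfl⟩ h
    have B : Gf c p t₁ < Gf c p t₂ := hmono self_mem_Ici h.le h
    linarith

/-- The function `g` of the critical case `q = 1*`. -/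
noncomputable def gFun (os a b t : ℝ) : ℝ :=
  ((1+t) ^ (1/b) - 1) * (1+t) ^ (os/a - 1/b) / t ^ (os/a)

/-- for `0 < a < 1*` and `b > 1`, `g → ∞` at `0⁺`, `g → 1` at
`∞`, and there is a unique `t₁ > 0` such that `g` is strictly decreasing on
`(0,t₁]` and strictly increasing on `[t₁,∞)`; the infimum `g(t₁) ∈ (0,1)` is
attained. -/
theorem g_min_interior (N : ℕ) (hN : 2 ≤ N) (a b : ℝ) (ha0 : 0 < a)
    (ha : a < (N : ℝ) / ((N : ℝ) - 1)) (hb : 1 < b) :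
    Tendsto (gFun ((N:ℝ)/((N:ℝ)-1)) a b) (nhdsWithin 0 (Set.Ioi 0)) atTop ∧
    Tendsto (gFun ((N:ℝ)/((N:ℝ)-1)) a b) atTop (nhds 1) ∧
    ∃! t₁ : ℝ, 0 < t₁ ∧
      StrictAntiOn (gFun ((N:ℝ)/((N:ℝ)-1)) a b) (Set.Ioc 0 t₁) ∧
      StrictMonoOn (gFun ((N:ℝ)/((N:ℝ)-1)) a b) (Set.Ici t₁) ∧
      sInf { r | ∃ t : ℝ, 0 < t ∧ r = gFun ((N:ℝ)/((N:ℝ)-1)) a b t } =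
        gFun ((N:ℝ)/((N:ℝ)-1)) a b t₁ ∧
      0 < gFun ((N:ℝ)/((N:ℝ)-1)) a b t₁ ∧ gFun ((N:ℝ)/((N:ℝ)-1)) a b t₁ < 1 := by
  have heq : gFun ((N:ℝ)/((N:ℝ)-1)) a b = Gf (((N:ℝ)/((N:ℝ)-1))/a) (1/b) := by
    funext t; rfl
  have hN2 : (2:ℝ) ≤ (N:ℝ) := by exact_mod_cast hN
  have hos : (0:ℝ) < (N:ℝ)/((N:ℝ)-1) := div_pos (by linarith) (by linarith)
  have hc : 1 < ((N:ℝ)/((N:ℝ)-1))/a := (one_lt_div ha0).mpr ha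
  have hp0 : (0:ℝ) < 1/b := by positivity
  have hp1 : 1/b < 1 := by rw [div_lt_one (by linarith)]; exact hb
  rw [heq]
  exact Gf_main hc hp0 hp1
end

section
/- Let N ≥ 2, 1* := N/(N-1), 0 < a < 1*, 0 < b ≤ 1. Then g(t) := ((1+t)^{1/b} - 1)(1+t)^{1*/a - 1/b} / t^{1*/a} is strictly decreasing on (0,∞) with limit 1 as t → ∞ (so inf g = 1, not attained), and h(t) := (1+t)^{1*/a - 1/b} / ((1+t)^{1*/a} - t^{1*/a}) is strictly decreasing on (0,∞) with h(t) → 1 as t → 0⁺ (so sup h = 1, not attained). -/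
open Real Filter Topology Set

-- Bernoulli consequences
lemma bern1 {p q t : ℝ} (hp : 1 ≤ p) (hq : 1 < q) (ht : 0 < t) :
    p * t < q * ((1+t)^p - 1) := by
  have h := one_add_mul_self_le_rpow_one_add (by linarith : (-1:ℝ) ≤ t) hp
  have hpt : 0 < p * t := by positivity
  nlinarith [h]

lemma bern2 {q t : ℝ} (hq : 1 < q) (ht : 0 < t) :
    q * t^(q-1) < (1+t)^q - t^q := by
  have hs : (0:ℝ) < 1/t := by positivity
  have hb := one_add_mul_self_lt_rpow_one_add (by linarith : (-1:ℝ) ≤ 1/t) (ne_of_gt hs) hq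
  have hmul : (1+t)^q = t^q * (1 + 1/t)^q := by
    rw [← Real.mul_rpow ht.le (by positivity)]
    congr 1
    field_simp
    ring
  have htq : (0:ℝ) < t^q := rpow_pos_of_pos ht q
  have hpow : t^(q-1) = t^q / t := by rw [Real.rpow_sub ht, Real.rpow_one]
  rw [hpow]
  have : t^q * (1 + q * (1/t)) < t^q * (1 + 1/t)^q := by
    exact mul_lt_mul_of_pos_left hb htq
  rw [← hmul] at this
  have ht' : t ≠ 0 := ht.ne'
  calc q * (t^q / t) = t^q * (q * (1/t)) := by field_simp
    _ < (1+t)^q - t^q := by nlinarith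

lemma G_hasDeriv (p q : ℝ) (hp : 1 ≤ p) (hq : 1 < q) {t : ℝ} (ht : 0 < t) :
    ∃ d : ℝ, d < 0 ∧
      HasDerivAt (fun t : ℝ => ((1+t)^p - 1) * (1+t)^(q-p) / t^q) d t := by
  have hX : (0:ℝ) < 1 + t := by linarith
  have h1 : HasDerivAt (fun s : ℝ => 1 + s) 1 t := (hasDerivAt_id t).const_add 1
  have hA : HasDerivAt (fun s : ℝ => (1+s)^p - 1) (p * (1+t)^(p-1) * 1) t :=
    ((Real.hasDerivAt_rpow_const (p := p) (Or.inl hX.ne')).comp t h1).sub_const 1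
  have hB : HasDerivAt (fun s : ℝ => (1+s)^(q-p)) ((q-p) * (1+t)^(q-p-1) * 1) t :=
    (Real.hasDerivAt_rpow_const (p := q-p) (Or.inl hX.ne')).comp t h1
  have hC : HasDerivAt (fun s : ℝ => s^q) (q * t^(q-1)) t :=
    Real.hasDerivAt_rpow_const (p := q) (Or.inl ht.ne')
  have hCne : t^q ≠ 0 := (rpow_pos_of_pos ht q).ne'
  have hG := (hA.mul hB).div hC hCne
  refine ⟨_, ?_, hG⟩
  -- sign of numerator
  have hu : (0:ℝ) < (1+t)^p := rpow_pos_of_pos hX p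
  have hv : (0:ℝ) < (1+t)^q := rpow_pos_of_pos hX q
  have hw : (0:ℝ) < t^q := rpow_pos_of_pos ht q
  have e1 : (1+t)^(p-1) = (1+t)^p / (1+t) := by rw [Real.rpow_sub hX, Real.rpow_one]
  have e2 : (1+t)^(q-p) = (1+t)^q / (1+t)^p := Real.rpow_sub hX q p
  have e3 : (1+t)^(q-p-1) = (1+t)^q / (1+t)^p / (1+t) := by
    rw [Real.rpow_sub hX, Real.rpow_sub hX, Real.rpow_one]
  have e4 : t^(q-1) = t^q / t := by rw [Real.rpow_sub ht, Real.rpow_one]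
  have key : (p * (1+t)^(p-1) * 1 * (1+t)^(q-p) +
        ((1+t)^p - 1) * ((q-p) * (1+t)^(q-p-1) * 1)) * t^q -
        ((1+t)^p - 1) * (1+t)^(q-p) * (q * t^(q-1)) =
      (1+t)^q * t^q * (p * t - q * ((1+t)^p - 1)) / ((1+t)^p * (1+t) * t) := by
    rw [e1, e2, e3, e4]
    field_simp
    ring
  have hneg : p * t - q * ((1+t)^p - 1) < 0 := by linarith [bern1 hp hq ht]
  have hnum : (p * (1+t)^(p-1) * 1 * (1+t)^(q-p) +
        ((1+t)^p - 1) * ((q-p) * (1+t)^(q-p-1) * 1)) * t^q -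
        ((1+t)^p - 1) * (1+t)^(q-p) * (q * t^(q-1)) < 0 := by
    rw [key]
    apply div_neg_of_neg_of_pos
    · exact mul_neg_of_pos_of_neg (by positivity) hneg
    · positivity
  exact div_neg_of_neg_of_pos hnum (by positivity)

lemma H_hasDeriv (p q : ℝ) (hp : 1 ≤ p) (hq : 1 < q) {t : ℝ} (ht : 0 < t) :
    ∃ d : ℝ, d < 0 ∧
      HasDerivAt (fun t : ℝ => (1+t)^(q-p) / ((1+t)^q - t^q)) d t := by
  have hX : (0:ℝ) < 1 + t := by linarith
  have h1 : HasDerivAt (fun s : ℝ => 1 + s) 1 t := (hasDerivAt_id t).const_add 1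
  have hB : HasDerivAt (fun s : ℝ => (1+s)^(q-p)) ((q-p) * (1+t)^(q-p-1) * 1) t :=
    (Real.hasDerivAt_rpow_const (p := q-p) (Or.inl hX.ne')).comp t h1
  have hD : HasDerivAt (fun s : ℝ => (1+s)^q - s^q)
      (q * (1+t)^(q-1) * 1 - q * t^(q-1)) t :=
    ((Real.hasDerivAt_rpow_const (p := q) (Or.inl hX.ne')).comp t h1).sub
      (Real.hasDerivAt_rpow_const (p := q) (Or.inl ht.ne'))
  have hDpos : (0:ℝ) < (1+t)^q - t^q := by
    have := bern2 hq ht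
    nlinarith [rpow_pos_of_pos ht (q-1)]
  have hH := hB.div hD hDpos.ne'
  refine ⟨_, ?_, hH⟩
  have hu : (0:ℝ) < (1+t)^p := rpow_pos_of_pos hX p
  have hv : (0:ℝ) < (1+t)^q := rpow_pos_of_pos hX q
  have hw : (0:ℝ) < t^q := rpow_pos_of_pos ht q
  have e2 : (1+t)^(q-p) = (1+t)^q / (1+t)^p := Real.rpow_sub hX q p
  have e3 : (1+t)^(q-p-1) = (1+t)^q / (1+t)^p / (1+t) := by
    rw [Real.rpow_sub hX, Real.rpow_sub hX, Real.rpow_one]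
  have e4 : t^(q-1) = t^q / t := by rw [Real.rpow_sub ht, Real.rpow_one]
  have e5 : (1+t)^(q-1) = (1+t)^q / (1+t) := by rw [Real.rpow_sub hX, Real.rpow_one]
  have key : (q-p) * (1+t)^(q-p-1) * 1 * ((1+t)^q - t^q) -
        (1+t)^(q-p) * (q * (1+t)^(q-1) * 1 - q * t^(q-1)) =
      (1+t)^q * (p * t^q * t + q * t^q - p * (1+t)^q * t) / ((1+t)^p * (1+t) * t) := by
    rw [e2, e3, e4, e5]
    field_simp
    ring
  have hneg : p * t^q * t + q * t^q - p * (1+t)^q * t < 0 := by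
    -- q * t^q < p * t * ((1+t)^q - t^q)
    have h2 : q * t^(q-1) < (1+t)^q - t^q := bern2 hq ht
    have e4' : t^(q-1) = t^q / t := by rw [Real.rpow_sub ht, Real.rpow_one]
    rw [e4'] at h2
    have h3 : q * t^q < t * ((1+t)^q - t^q) := by
      have := mul_lt_mul_of_pos_left h2 ht
      calc q * t^q = t * (q * (t^q / t)) := by field_simp
        _ < t * ((1+t)^q - t^q) := this
    nlinarith [mul_pos ht (sub_pos.mpr (show t^q < (1+t)^q from by nlinarith))]
  have hnum : (q-p) * (1+t)^(q-p-1) * 1 * ((1+t)^q - t^q) -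
        (1+t)^(q-p) * (q * (1+t)^(q-1) * 1 - q * t^(q-1)) < 0 := by
    rw [key]
    apply div_neg_of_neg_of_pos
    · exact mul_neg_of_pos_of_neg (by positivity) hneg
    · positivity
  exact div_neg_of_neg_of_pos hnum (by positivity)

lemma G_anti (p q : ℝ) (hp : 1 ≤ p) (hq : 1 < q) :
    StrictAntiOn (fun t : ℝ => ((1+t)^p - 1) * (1+t)^(q-p) / t^q) (Set.Ioi 0) := by
  apply strictAntiOn_of_deriv_neg (convex_Ioi 0)
  · intro x hx
    obtain ⟨d, _, hd⟩ := G_hasDeriv p q hp hq hx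
    exact hd.continuousAt.continuousWithinAt
  · intro x hx
    rw [interior_Ioi] at hx
    obtain ⟨d, hdneg, hd⟩ := G_hasDeriv p q hp hq hx
    rwa [hd.deriv]

lemma H_anti (p q : ℝ) (hp : 1 ≤ p) (hq : 1 < q) :
    StrictAntiOn (fun t : ℝ => (1+t)^(q-p) / ((1+t)^q - t^q)) (Set.Ioi 0) := by
  apply strictAntiOn_of_deriv_neg (convex_Ioi 0)
  · intro x hx
    obtain ⟨d, _, hd⟩ := H_hasDeriv p q hp hq hx
    exact hd.continuousAt.continuousWithinAt
  · intro x hx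
    rw [interior_Ioi] at hx
    obtain ⟨d, hdneg, hd⟩ := H_hasDeriv p q hp hq hx
    rwa [hd.deriv]

lemma G_tendsto (p q : ℝ) (hp : 1 ≤ p) (hq : 1 < q) :
    Tendsto (fun t : ℝ => ((1+t)^p - 1) * (1+t)^(q-p) / t^q) atTop (nhds 1) := by
  have heq : ∀ᶠ t in (atTop : Filter ℝ),
      ((1+t)^p - 1) * (1+t)^(q-p) / t^q = (1 - (1+t)^(-p)) * (1/t + 1)^q := by
    filter_upwards [eventually_gt_atTop (0:ℝ)] with t ht
    have hX : (0:ℝ) < 1 + t := by linarith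
    have h1 : (1+t)^(q-p) = (1+t)^q * (1+t)^(-p) := by
      rw [← Real.rpow_add hX]; ring_nf
    have h2 : ((1+t)^p - 1) * (1+t)^(-p) = 1 - (1+t)^(-p) := by
      rw [sub_mul, ← Real.rpow_add hX]
      simp
    have h3 : (1+t)^q / t^q = (1/t + 1)^q := by
      rw [← Real.div_rpow hX.le ht.le]
      congr 1
      field_simp
    calc ((1+t)^p - 1) * (1+t)^(q-p) / t^q
        = (((1+t)^p - 1) * (1+t)^(-p)) * ((1+t)^q / t^q) := by rw [h1]; ring
      _ = (1 - (1+t)^(-p)) * (1/t + 1)^q := by rw [h2, h3]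
  have T1 : Tendsto (fun t : ℝ => (1+t)^(-p)) atTop (nhds 0) := by
    have := tendsto_rpow_neg_atTop (by linarith : 0 < p)
    exact this.comp (tendsto_atTop_add_const_left _ 1 tendsto_id)
  have T2 : Tendsto (fun t : ℝ => (1/t + 1)^q) atTop (nhds 1) := by
    have hbase : Tendsto (fun t : ℝ => 1/t + 1) atTop (nhds (0 + 1)) := by
      have h0 : Tendsto (fun t : ℝ => 1/t) atTop (nhds 0) := by
        simpa [one_div] using (tendsto_inv_atTop_zero : Tendsto (fun x : ℝ => x⁻¹) atTop (nhds 0))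
      exact h0.add tendsto_const_nhds
    have hc : ContinuousAt (fun x : ℝ => x ^ q) 1 :=
      Real.continuousAt_rpow_const 1 q (Or.inl one_ne_zero)
    have := hc.tendsto.comp (by simpa using hbase)
    simpa [Function.comp_def] using this
  have Tright : Tendsto (fun t : ℝ => (1 - (1+t)^(-p)) * (1/t + 1)^q) atTop
      (nhds ((1 - 0) * 1)) :=
    ((tendsto_const_nhds : Tendsto (fun _ : ℝ => (1:ℝ)) atTop (nhds 1)).sub T1).mul T2
  refine Tendsto.congr' (heq.mono fun t h => h.symm) ?_
  simpa using Tright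

lemma H_tendsto (p q : ℝ) (hq0 : 0 < q) :
    Tendsto (fun t : ℝ => (1+t)^(q-p) / ((1+t)^q - t^q))
      (nhdsWithin 0 (Set.Ioi 0)) (nhds 1) := by
  have T1 : Tendsto (fun t : ℝ => (1+t)^(q-p)) (nhdsWithin 0 (Set.Ioi 0)) (nhds 1) := by
    have hc : ContinuousAt (fun t : ℝ => (1+t)^(q-p)) 0 :=
      (continuousAt_const.add continuousAt_id).rpow_const (Or.inl (by norm_num))
    have := hc.tendsto.mono_left
      (nhdsWithin_le_nhds : nhdsWithin (0:ℝ) (Set.Ioi 0) ≤ nhds 0)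
    simpa using this
  have T2 : Tendsto (fun t : ℝ => (1+t)^q - t^q) (nhdsWithin 0 (Set.Ioi 0)) (nhds 1) := by
    have hc1 : ContinuousAt (fun t : ℝ => (1+t)^q) 0 :=
      (continuousAt_const.add continuousAt_id).rpow_const (Or.inl (by norm_num))
    have hc2 : ContinuousAt (fun t : ℝ => t^q) 0 :=
      continuousAt_id.rpow_const (Or.inr hq0.le)
    have := (hc1.sub hc2).tendsto.mono_left
      (nhdsWithin_le_nhds (s := Set.Ioi (0:ℝ)))
    simpa [Real.zero_rpow hq0.ne', Pi.sub_def] using this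
  have := T1.div T2 one_ne_zero
  simpa [Pi.div_def] using this

lemma inf_part (f : ℝ → ℝ) (hanti : StrictAntiOn f (Set.Ioi 0))
    (htend : Tendsto f atTop (nhds 1)) :
    (∀ t, 0 < t → 1 < f t) ∧ sInf {r | ∃ t : ℝ, 0 < t ∧ r = f t} = 1 := by
  have hge : ∀ t, 0 < t → 1 ≤ f t := by
    intro t ht
    refine le_of_tendsto htend ?_
    filter_upwards [eventually_ge_atTop t] with s hs
    rcases eq_or_lt_of_le hs with h | h
    · exact le_of_eq (by rw [h])
    · exact (hanti ht (lt_trans ht h) h).le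
  have hgt : ∀ t, 0 < t → 1 < f t := fun t ht =>
    lt_of_le_of_lt (hge (t+1) (by linarith))
      (hanti ht (by simp only [Set.mem_Ioi]; linarith) (lt_add_one t))
  refine ⟨hgt, ?_⟩
  have hne : {r | ∃ t : ℝ, 0 < t ∧ r = f t}.Nonempty := ⟨f 1, 1, one_pos, rfl⟩
  have hbdd : BddBelow {r | ∃ t : ℝ, 0 < t ∧ r = f t} := by
    refine ⟨1, ?_⟩
    rintro r ⟨t, ht, rfl⟩
    exact (hgt t ht).le
  apply le_antisymm
  · apply le_of_forall_pos_le_add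
    intro ε hε
    obtain ⟨t, ht0, htlt⟩ : ∃ t : ℝ, 0 < t ∧ f t < 1 + ε := by
      have h1 : ∀ᶠ s in atTop, f s < 1 + ε := htend.eventually (gt_mem_nhds (by linarith))
      obtain ⟨t, h2, h3⟩ := (h1.and (eventually_gt_atTop 0)).exists
      exact ⟨t, h3, h2⟩
    exact le_trans (csInf_le hbdd ⟨t, ht0, rfl⟩) htlt.le
  · refine le_csInf hne ?_
    rintro r ⟨t, ht, rfl⟩
    exact (hgt t ht).le

lemma sup_part (f : ℝ → ℝ) (hanti : StrictAntiOn f (Set.Ioi 0))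
    (htend : Tendsto f (nhdsWithin 0 (Set.Ioi 0)) (nhds 1)) :
    (∀ t, 0 < t → f t < 1) ∧ sSup {r | ∃ t : ℝ, 0 < t ∧ r = f t} = 1 := by
  have hle : ∀ t, 0 < t → f t ≤ 1 := by
    intro t ht
    refine ge_of_tendsto htend ?_
    filter_upwards [Ioo_mem_nhdsGT_of_mem (⟨le_refl 0, ht⟩ : (0:ℝ) ∈ Set.Ico 0 t)]
      with s hs
    exact (hanti hs.1 ht hs.2).le
  have hlt : ∀ t, 0 < t → f t < 1 := fun t ht =>
    lt_of_lt_of_le (hanti (Set.mem_Ioi.mpr (half_pos ht)) (Set.mem_Ioi.mpr ht)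
      (half_lt_self ht)) (hle (t/2) (half_pos ht))
  refine ⟨hlt, ?_⟩
  have hne : {r | ∃ t : ℝ, 0 < t ∧ r = f t}.Nonempty := ⟨f 1, 1, one_pos, rfl⟩
  have hbdd : BddAbove {r | ∃ t : ℝ, 0 < t ∧ r = f t} := by
    refine ⟨1, ?_⟩
    rintro r ⟨t, ht, rfl⟩
    exact (hlt t ht).le
  apply le_antisymm
  · refine csSup_le hne ?_
    rintro r ⟨t, ht, rfl⟩
    exact (hlt t ht).le
  · by_contra hcon
    push_neg at hcon
    obtain ⟨t, ht0, hgt'⟩ : ∃ t : ℝ, 0 < t ∧ sSup {r | ∃ t : ℝ, 0 < t ∧ r = f t} < f t := by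
      have h1 : ∀ᶠ s in nhdsWithin 0 (Set.Ioi 0),
          sSup {r | ∃ t : ℝ, 0 < t ∧ r = f t} < f s := htend.eventually (lt_mem_nhds hcon)
      obtain ⟨t, h2, h3⟩ := (h1.and self_mem_nhdsWithin).exists
      exact ⟨t, h3, h2⟩
    exact absurd (le_csSup hbdd ⟨t, ht0, rfl⟩) (not_le.mpr hgt')

/-- for `0 < a < 1*` and `0 < b ≤ 1`, both `g` and `h` are
strictly decreasing; `inf g = 1` and `sup h = 1`, and neither is attained. -/
theorem g_h_strictAnti (N : ℕ) (hN : 2 ≤ N) (a b : ℝ) (ha0 : 0 < a)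
    (ha : a < (N : ℝ) / ((N : ℝ) - 1)) (hb0 : 0 < b) (hb : b ≤ 1) :
    StrictAntiOn (fun t : ℝ =>
        ((1+t) ^ (1/b) - 1) * (1+t) ^ (((N:ℝ)/((N:ℝ)-1))/a - 1/b) /
          t ^ (((N:ℝ)/((N:ℝ)-1))/a)) (Set.Ioi 0) ∧
    Tendsto (fun t : ℝ =>
        ((1+t) ^ (1/b) - 1) * (1+t) ^ (((N:ℝ)/((N:ℝ)-1))/a - 1/b) /
          t ^ (((N:ℝ)/((N:ℝ)-1))/a)) atTop (nhds 1) ∧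
    sInf { r | ∃ t : ℝ, 0 < t ∧
        r = ((1+t) ^ (1/b) - 1) * (1+t) ^ (((N:ℝ)/((N:ℝ)-1))/a - 1/b) /
              t ^ (((N:ℝ)/((N:ℝ)-1))/a) } = 1 ∧
    (¬ ∃ t : ℝ, 0 < t ∧
        ((1+t) ^ (1/b) - 1) * (1+t) ^ (((N:ℝ)/((N:ℝ)-1))/a - 1/b) /
            t ^ (((N:ℝ)/((N:ℝ)-1))/a) =
          sInf { r | ∃ t : ℝ, 0 < t ∧
            r = ((1+t) ^ (1/b) - 1) * (1+t) ^ (((N:ℝ)/((N:ℝ)-1))/a - 1/b) /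
                  t ^ (((N:ℝ)/((N:ℝ)-1))/a) }) ∧
    StrictAntiOn (fun t : ℝ =>
        (1+t) ^ (((N:ℝ)/((N:ℝ)-1))/a - 1/b) /
          ((1+t) ^ (((N:ℝ)/((N:ℝ)-1))/a) - t ^ (((N:ℝ)/((N:ℝ)-1))/a))) (Set.Ioi 0) ∧
    Tendsto (fun t : ℝ =>
        (1+t) ^ (((N:ℝ)/((N:ℝ)-1))/a - 1/b) /
          ((1+t) ^ (((N:ℝ)/((N:ℝ)-1))/a) - t ^ (((N:ℝ)/((N:ℝ)-1))/a)))
      (nhdsWithin 0 (Set.Ioi 0)) (nhds 1) ∧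
    sSup { r | ∃ t : ℝ, 0 < t ∧
        r = (1+t) ^ (((N:ℝ)/((N:ℝ)-1))/a - 1/b) /
              ((1+t) ^ (((N:ℝ)/((N:ℝ)-1))/a) - t ^ (((N:ℝ)/((N:ℝ)-1))/a)) } = 1 ∧
    ¬ ∃ t : ℝ, 0 < t ∧
        (1+t) ^ (((N:ℝ)/((N:ℝ)-1))/a - 1/b) /
            ((1+t) ^ (((N:ℝ)/((N:ℝ)-1))/a) - t ^ (((N:ℝ)/((N:ℝ)-1))/a)) =
          sSup { r | ∃ t : ℝ, 0 < t ∧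
            r = (1+t) ^ (((N:ℝ)/((N:ℝ)-1))/a - 1/b) /
                  ((1+t) ^ (((N:ℝ)/((N:ℝ)-1))/a) - t ^ (((N:ℝ)/((N:ℝ)-1))/a)) } := by
  have hp : (1:ℝ) ≤ 1/b := one_le_one_div hb0 hb
  have hq : 1 < ((N:ℝ)/((N:ℝ)-1))/a := (one_lt_div ha0).mpr ha
  have hGa := G_anti (1/b) (((N:ℝ)/((N:ℝ)-1))/a) hp hq
  have hGt := G_tendsto (1/b) (((N:ℝ)/((N:ℝ)-1))/a) hp hq
  obtain ⟨hGgt, hGinf⟩ := inf_part _ hGa hGt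
  have hHa := H_anti (1/b) (((N:ℝ)/((N:ℝ)-1))/a) hp hq
  have hHt := H_tendsto (p := 1/b) (((N:ℝ)/((N:ℝ)-1))/a) (by linarith)
  obtain ⟨hHlt, hHsup⟩ := sup_part _ hHa hHt
  refine ⟨hGa, hGt, hGinf, ?_, hHa, hHt, hHsup, ?_⟩
  · rintro ⟨t, ht, heq⟩
    rw [hGinf] at heq
    exact absurd heq (hGgt t ht).ne'
  · rintro ⟨t, ht, heq⟩
    rw [hHsup] at heq
    exact absurd heq (hHlt t ht).ne
end
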